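/- arXiv:cond-mat/0608126 — 11 statements merged into one kernel-verified Lean document; each statement's English description precedes it below -/
import Mathlib

section
/- Let n = (n₁,n₂,n₃) be a unit vector in ℝ³ such that the six real numbers n₂²−n₃²+g(n), n₃²−n₁²+g(n), n₁²−n₂²+g(n), n₂²−n₃²−g(n), n₃²−n₁²−g(n), n₁²−n₂²−g(n) are all nonzero. Then the three vectors n, u₊(n), u₋(n) form an orthonormal set in ℝ³: ⟨n, u₊(n)⟩ = 0, ⟨n, u₋(n)⟩ = 0, ⟨u₊(n), u₋(n)⟩ = 0, and ‖u₊(n)‖ = ‖u₋(n)‖ = 1. -/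
noncomputable section

/-- Dot product on ℝ³ (standard inner product), vectors as triples. -/
def dot3 (x y : ℝ × ℝ × ℝ) : ℝ := x.1 * y.1 + x.2.1 * y.2.1 + x.2.2 * y.2.2

/-- g(n) = √(1 − 4(n₁²n₂² + n₂²n₃² + n₃²n₁²) + 9n₁²n₂²n₃²). -/
def gfun (n₁ n₂ n₃ : ℝ) : ℝ :=
  Real.sqrt (1 - 4*(n₁^2*n₂^2 + n₂^2*n₃^2 + n₃^2*n₁^2) + 9*n₁^2*n₂^2*n₃^2)

/-- Normalizing factor ρ for the vector (n₁/(n₂²−n₃²+e), n₂/(n₃²−n₁²+e), n₃/(n₁²−n₂²+e)). -/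
def rho (n₁ n₂ n₃ e : ℝ) : ℝ :=
  1 / Real.sqrt (n₁^2/(n₂^2-n₃^2+e)^2 + n₂^2/(n₃^2-n₁^2+e)^2 + n₃^2/(n₁^2-n₂^2+e)^2)

/-- The unit vector in the direction (n₁/(n₂²−n₃²+e), n₂/(n₃²−n₁²+e), n₃/(n₁²−n₂²+e)). -/
def uvec (n₁ n₂ n₃ e : ℝ) : ℝ × ℝ × ℝ :=
  (rho n₁ n₂ n₃ e * (n₁ / (n₂^2 - n₃^2 + e)),
   rho n₁ n₂ n₃ e * (n₂ / (n₃^2 - n₁^2 + e)),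
   rho n₁ n₂ n₃ e * (n₃ / (n₁^2 - n₂^2 + e)))

/-- u₊(n): the + sign throughout. -/
def uplus (n₁ n₂ n₃ : ℝ) : ℝ × ℝ × ℝ := uvec n₁ n₂ n₃ (gfun n₁ n₂ n₃)

/-- u₋(n): the − sign throughout. -/
def uminus (n₁ n₂ n₃ : ℝ) : ℝ × ℝ × ℝ := uvec n₁ n₂ n₃ (-(gfun n₁ n₂ n₃))


/-- Schur's inequality (t = 1), homogeneous form. -/
lemma schur_hom (a b c : ℝ) (ha : 0 ≤ a) (hb : 0 ≤ b) (hc : 0 ≤ c) :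
    0 ≤ (a+b+c)^3 - 4*(a+b+c)*(a*b+b*c+c*a) + 9*a*b*c := by
  rcases le_total a b with h1 | h1 <;> rcases le_total b c with h2 | h2 <;>
    rcases le_total a c with h3 | h3
  · -- a ≤ b ≤ c, a min
    nlinarith [mul_nonneg (sq_nonneg (c-b)) (show (0:ℝ) ≤ b+c-a by linarith),
      mul_nonneg (mul_nonneg ha (show (0:ℝ) ≤ c-a by linarith)) (show (0:ℝ) ≤ b-a by linarith)]
  · nlinarith [mul_nonneg (sq_nonneg (c-b)) (show (0:ℝ) ≤ b+c-a by linarith),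
      mul_nonneg (mul_nonneg ha (show (0:ℝ) ≤ c-a by linarith)) (show (0:ℝ) ≤ b-a by linarith)]
  · -- a ≤ b, c ≤ b, a ≤ c : a min, b max
    nlinarith [mul_nonneg (sq_nonneg (b-c)) (show (0:ℝ) ≤ b+c-a by linarith),
      mul_nonneg (mul_nonneg ha (show (0:ℝ) ≤ b-a by linarith)) (show (0:ℝ) ≤ c-a by linarith)]
  · -- a ≤ b, c ≤ b, c ≤ a : c min, b max
    nlinarith [mul_nonneg (sq_nonneg (b-a)) (show (0:ℝ) ≤ a+b-c by linarith),
      mul_nonneg (mul_nonneg hc (show (0:ℝ) ≤ b-c by linarith)) (show (0:ℝ) ≤ a-c by linarith)]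
  · -- b ≤ a, b ≤ c, a ≤ c : b min, c max
    nlinarith [mul_nonneg (sq_nonneg (c-a)) (show (0:ℝ) ≤ a+c-b by linarith),
      mul_nonneg (mul_nonneg hb (show (0:ℝ) ≤ c-b by linarith)) (show (0:ℝ) ≤ a-b by linarith)]
  · -- b ≤ a, b ≤ c, c ≤ a : b min, a max
    nlinarith [mul_nonneg (sq_nonneg (a-c)) (show (0:ℝ) ≤ a+c-b by linarith),
      mul_nonneg (mul_nonneg hb (show (0:ℝ) ≤ a-b by linarith)) (show (0:ℝ) ≤ c-b by linarith)]
  · -- b ≤ a? no: c ≤ b ≤ a? here h1 : b ≤ a, h2 : c ≤ b, h3 : a ≤ c forces a=b=c-ish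
    nlinarith [mul_nonneg (sq_nonneg (a-b)) (show (0:ℝ) ≤ a+b-c by linarith),
      mul_nonneg (mul_nonneg hc (show (0:ℝ) ≤ a-c by linarith)) (show (0:ℝ) ≤ b-c by linarith)]
  · -- c ≤ b ≤ a : c min, a max
    nlinarith [mul_nonneg (sq_nonneg (a-b)) (show (0:ℝ) ≤ a+b-c by linarith),
      mul_nonneg (mul_nonneg hc (show (0:ℝ) ≤ a-c by linarith)) (show (0:ℝ) ≤ b-c by linarith)]

lemma E_nonneg (n₁ n₂ n₃ : ℝ) (hunit : n₁^2 + n₂^2 + n₃^2 = 1) :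
    0 ≤ 1 - 4*(n₁^2*n₂^2 + n₂^2*n₃^2 + n₃^2*n₁^2) + 9*n₁^2*n₂^2*n₃^2 := by
  have h := schur_hom (n₁^2) (n₂^2) (n₃^2) (sq_nonneg _) (sq_nonneg _) (sq_nonneg _)
  rw [hunit] at h
  linarith [h]


lemma key1 (n₁ n₂ n₃ e : ℝ) (hunit : n₁^2 + n₂^2 + n₃^2 = 1)
    (hg2 : e^2 = 1 - 4*(n₁^2*n₂^2 + n₂^2*n₃^2 + n₃^2*n₁^2) + 9*n₁^2*n₂^2*n₃^2)
    (hA : n₂^2 - n₃^2 + e ≠ 0) (hB : n₃^2 - n₁^2 + e ≠ 0) (hC : n₁^2 - n₂^2 + e ≠ 0) :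
    n₁^2/(n₂^2 - n₃^2 + e) + n₂^2/(n₃^2 - n₁^2 + e) + n₃^2/(n₁^2 - n₂^2 + e) = 0 := by
  rw [div_add_div _ _ hA hB, div_add_div _ _ (mul_ne_zero hA hB) hC, div_eq_zero_iff]
  left
  linear_combination (n₃^2 + n₂^2 + n₁^2) * hg2 + (-1*n₃^2 - 1*n₃^4 - 1*n₂^2 - 2*n₂^2*n₃^2 - 1*n₂^4 - 1*n₁^2 - 2*n₁^2*n₃^2 - 2*n₁^2*n₂^2 + 9*n₁^2*n₂^2*n₃^2 - 1*n₁^4) * hunit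

lemma key3 (n₁ n₂ n₃ e : ℝ) (hunit : n₁^2 + n₂^2 + n₃^2 = 1)
    (hg2 : e^2 = 1 - 4*(n₁^2*n₂^2 + n₂^2*n₃^2 + n₃^2*n₁^2) + 9*n₁^2*n₂^2*n₃^2)
    (hA : n₂^2 - n₃^2 + e ≠ 0) (hB : n₃^2 - n₁^2 + e ≠ 0) (hC : n₁^2 - n₂^2 + e ≠ 0)
    (hA' : n₂^2 - n₃^2 - e ≠ 0) (hB' : n₃^2 - n₁^2 - e ≠ 0) (hC' : n₁^2 - n₂^2 - e ≠ 0) :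
    n₁^2/((n₂^2 - n₃^2 + e) * (n₂^2 - n₃^2 - e))
      + n₂^2/((n₃^2 - n₁^2 + e) * (n₃^2 - n₁^2 - e))
      + n₃^2/((n₁^2 - n₂^2 + e) * (n₁^2 - n₂^2 - e)) = 0 := by
  rw [div_add_div _ _ (mul_ne_zero hA hA') (mul_ne_zero hB hB'),
    div_add_div _ _ (mul_ne_zero (mul_ne_zero hA hA') (mul_ne_zero hB hB'))
      (mul_ne_zero hC hC'), div_eq_zero_iff]
  left
  linear_combination (n₃^2 + n₃^2*e^2 - 2*n₃^6 + n₂^2 + n₂^2*e^2 - 3*n₂^2*n₃^4 - 3*n₂^4*n₃^2 - 2*n₂^6 + n₁^2 + n₁^2*e^2 - 3*n₁^2*n₃^4 - 12*n₁^2*n₂^2*n₃^2 + 9*n₁^2*n₂^2*n₃^4 - 3*n₁^2*n₂^4 + 9*n₁^2*n₂^4*n₃^2 - 3*n₁^4*n₃^2 - 3*n₁^4*n₂^2 + 9*n₁^4*n₂^2*n₃^2 - 2*n₁^6) * hg2 + (-1*n₃^2 - 1*n₃^4 + n₃^6 + n₃^8 - 1*n₂^2 - 2*n₂^2*n₃^2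 + 4*n₂^2*n₃^4 + 5*n₂^2*n₃^6 - 1*n₂^4 + 4*n₂^4*n₃^2 + 8*n₂^4*n₃^4 + n₂^6 + 5*n₂^6*n₃^2 + n₂^8 - 1*n₁^2 - 2*n₁^2*n₃^2 + 4*n₁^2*n₃^4 + 5*n₁^2*n₃^6 - 2*n₁^2*n₂^2 + 18*n₁^2*n₂^2*n₃^2 + 8*n₁^2*n₂^2*n₃^4 - 18*n₁^2*n₂^2*n₃^6 + 4*n₁^2*n₂^4 + 8*n₁^2*n₂^4*n₃^2 - 45*n₁^2*n₂^4*n₃^4 + 5*n₁^2*n₂^6 - 18*n₁^2*n₂^6*n₃^2 - 1*n₁^4 + 4*n₁^4*n₃^2 + 8*n₁^4*n₃^4 + 4*n₁^4*n₂^2 + 8*n₁^4*n₂^2*n₃^2 - 45*n₁^4*n₂^2*n₃^4 + 8*n₁^4*n₂^4 - 45*n₁^4*n₂^4*n₃^2 + 81*n₁^4*n₂^4*n₃^4 + n₁^6 + 5*n₁^6*n₃^2 + 5*n₁^6*n₂^2 - 18*n₁^6*n₂^2*n₃^2 + n₁^8) * hunit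

lemma S_pos (n₁ n₂ n₃ e : ℝ) (hunit : n₁^2 + n₂^2 + n₃^2 = 1)
    (hA : n₂^2 - n₃^2 + e ≠ 0) (hB : n₃^2 - n₁^2 + e ≠ 0) (hC : n₁^2 - n₂^2 + e ≠ 0) :
    0 < n₁^2/(n₂^2 - n₃^2 + e)^2 + n₂^2/(n₃^2 - n₁^2 + e)^2 + n₃^2/(n₁^2 - n₂^2 + e)^2 := by
  have hn : n₁ ≠ 0 ∨ n₂ ≠ 0 ∨ n₃ ≠ 0 := by
    by_contra h
    push_neg at h
    obtain ⟨e1, e2, e3⟩ := h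
    rw [e1, e2, e3] at hunit
    norm_num at hunit
  have t1 : 0 ≤ n₁^2/(n₂^2 - n₃^2 + e)^2 := by positivity
  have t2 : 0 ≤ n₂^2/(n₃^2 - n₁^2 + e)^2 := by positivity
  have t3 : 0 ≤ n₃^2/(n₁^2 - n₂^2 + e)^2 := by positivity
  rcases hn with h | h | h
  · have : 0 < n₁^2/(n₂^2 - n₃^2 + e)^2 := by positivity
    linarith
  · have : 0 < n₂^2/(n₃^2 - n₁^2 + e)^2 := by positivity
    linarith
  · have : 0 < n₃^2/(n₁^2 - n₂^2 + e)^2 := by positivity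
    linarith

lemma rho_sq (n₁ n₂ n₃ e : ℝ) (hunit : n₁^2 + n₂^2 + n₃^2 = 1)
    (hA : n₂^2 - n₃^2 + e ≠ 0) (hB : n₃^2 - n₁^2 + e ≠ 0) (hC : n₁^2 - n₂^2 + e ≠ 0) :
    (rho n₁ n₂ n₃ e)^2 * (n₁^2/(n₂^2 - n₃^2 + e)^2 + n₂^2/(n₃^2 - n₁^2 + e)^2
      + n₃^2/(n₁^2 - n₂^2 + e)^2) = 1 := by
  have hS := S_pos n₁ n₂ n₃ e hunit hA hB hC
  rw [rho, div_pow, one_pow, Real.sq_sqrt hS.le]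
  exact one_div_mul_cancel (ne_of_gt hS)

/-- n, u₊(n), u₋(n) form an orthonormal set in ℝ³. -/
theorem stmt0 (n₁ n₂ n₃ : ℝ) (hunit : n₁^2 + n₂^2 + n₃^2 = 1)
    (h1 : n₂^2 - n₃^2 + gfun n₁ n₂ n₃ ≠ 0)
    (h2 : n₃^2 - n₁^2 + gfun n₁ n₂ n₃ ≠ 0)
    (h3 : n₁^2 - n₂^2 + gfun n₁ n₂ n₃ ≠ 0)
    (h4 : n₂^2 - n₃^2 - gfun n₁ n₂ n₃ ≠ 0)
    (h5 : n₃^2 - n₁^2 - gfun n₁ n₂ n₃ ≠ 0)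
    (h6 : n₁^2 - n₂^2 - gfun n₁ n₂ n₃ ≠ 0) :
    dot3 (n₁, n₂, n₃) (uplus n₁ n₂ n₃) = 0 ∧
    dot3 (n₁, n₂, n₃) (uminus n₁ n₂ n₃) = 0 ∧
    dot3 (uplus n₁ n₂ n₃) (uminus n₁ n₂ n₃) = 0 ∧
    dot3 (uplus n₁ n₂ n₃) (uplus n₁ n₂ n₃) = 1 ∧
    dot3 (uminus n₁ n₂ n₃) (uminus n₁ n₂ n₃) = 1 := by
  have hE := E_nonneg n₁ n₂ n₃ hunit
  have hg2 : (gfun n₁ n₂ n₃)^2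
      = 1 - 4*(n₁^2*n₂^2 + n₂^2*n₃^2 + n₃^2*n₁^2) + 9*n₁^2*n₂^2*n₃^2 :=
    Real.sq_sqrt hE
  set g := gfun n₁ n₂ n₃ with hgdef
  have h4' : n₂^2 - n₃^2 + -g ≠ 0 := by rwa [← sub_eq_add_neg]
  have h5' : n₃^2 - n₁^2 + -g ≠ 0 := by rwa [← sub_eq_add_neg]
  have h6' : n₁^2 - n₂^2 + -g ≠ 0 := by rwa [← sub_eq_add_neg]
  have hg2' : (-g)^2
      = 1 - 4*(n₁^2*n₂^2 + n₂^2*n₃^2 + n₃^2*n₁^2) + 9*n₁^2*n₂^2*n₃^2 := by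
    rw [neg_pow]; simpa using hg2
  have k1p := key1 n₁ n₂ n₃ g hunit hg2 h1 h2 h3
  have k1m := key1 n₁ n₂ n₃ (-g) hunit hg2' h4' h5' h6'
  have k3 := key3 n₁ n₂ n₃ g hunit hg2 h1 h2 h3 h4 h5 h6
  have r1 := rho_sq n₁ n₂ n₃ g hunit h1 h2 h3
  have r2 := rho_sq n₁ n₂ n₃ (-g) hunit h4' h5' h6'
  have comp1 : ∀ i r A : ℝ, i * (r * (i/A)) = r * (i^2/A) := by intros; ring
  have comp2 : ∀ r s i A B : ℝ, (r*(i/A)) * (s*(i/B)) = (r*s) * (i^2/(A*B)) := by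
    intros; ring
  have comp3 : ∀ r i A : ℝ, (r*(i/A)) * (r*(i/A)) = r^2 * (i^2/A^2) := by intros; ring
  refine ⟨?_, ?_, ?_, ?_, ?_⟩
  · simp only [uplus, uvec, dot3, ← hgdef]
    rw [comp1, comp1, comp1, ← mul_add, ← mul_add, k1p, mul_zero]
  · simp only [uminus, uvec, dot3, ← hgdef]
    rw [comp1, comp1, comp1, ← mul_add, ← mul_add, k1m, mul_zero]
  · simp only [uplus, uminus, uvec, dot3, ← hgdef]
    rw [comp2, comp2, comp2, ← mul_add, ← mul_add]
    simp only [← sub_eq_add_neg]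
    rw [k3, mul_zero]
  · simp only [uplus, uvec, dot3, ← hgdef]
    rw [comp3, comp3, comp3, ← mul_add, ← mul_add]
    exact r1
  · simp only [uminus, uvec, dot3, ← hgdef]
    rw [comp3, comp3, comp3, ← mul_add, ← mul_add]
    exact r2
end
end

section
/- Let n = (n₁,n₂,n₃) be a unit vector in ℝ³ such that the six real numbers n₂²−n₃²±g(n), n₃²−n₁²±g(n), n₁²−n₂²±g(n) are all nonzero, and suppose n₁n₂n₃ ≠ 0 and nᵢ² ≠ 1/3 for i = 1,2,3. Then f(v₁(n)) = 0 and f(v₂(n)) = 0; equivalently, the 3×3 matrix whose rows are (n₁²,n₂²,n₃²), (v₁(n)₁², v₁(n)₂², v₁(n)₃²), (v₂(n)₁², v₂(n)₂², v₂(n)₃²) has determinant zero. -/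
noncomputable section

def smul3 (t : ℝ) (x : ℝ × ℝ × ℝ) : ℝ × ℝ × ℝ := (t * x.1, t * x.2.1, t * x.2.2)
def add3 (x y : ℝ × ℝ × ℝ) : ℝ × ℝ × ℝ := (x.1 + y.1, x.2.1 + y.2.1, x.2.2 + y.2.2)
def sub3 (x y : ℝ × ℝ × ℝ) : ℝ × ℝ × ℝ := (x.1 - y.1, x.2.1 - y.2.1, x.2.2 - y.2.2)

/-- s(n) = sign(n₁n₂n₃(n₁²−1/3)(n₂²−1/3)(n₃²−1/3)). -/
def sfun (n₁ n₂ n₃ : ℝ) : ℝ :=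
  Real.sign (n₁*n₂*n₃*(n₁^2 - 1/3)*(n₂^2 - 1/3)*(n₃^2 - 1/3))

/-- v₁(n) = (u₋(n) − s(n)·u₊(n))/√2. -/
def v1 (n₁ n₂ n₃ : ℝ) : ℝ × ℝ × ℝ :=
  smul3 (1 / Real.sqrt 2) (sub3 (uminus n₁ n₂ n₃) (smul3 (sfun n₁ n₂ n₃) (uplus n₁ n₂ n₃)))

/-- v₂(n) = (u₋(n) + s(n)·u₊(n))/√2. -/
def v2 (n₁ n₂ n₃ : ℝ) : ℝ × ℝ × ℝ :=
  smul3 (1 / Real.sqrt 2) (add3 (uminus n₁ n₂ n₃) (smul3 (sfun n₁ n₂ n₃) (uplus n₁ n₂ n₃)))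

/-- f(m) = (n₃²−n₂²)m₁² + (n₁²−n₃²)m₂² + (n₂²−n₁²)m₃², for fixed unit vector n. -/
def ffun (n₁ n₂ n₃ : ℝ) (m : ℝ × ℝ × ℝ) : ℝ :=
  (n₃^2 - n₂^2) * m.1^2 + (n₁^2 - n₃^2) * m.2.1^2 + (n₂^2 - n₁^2) * m.2.2^2

private lemma schur_sorted (a b c : ℝ) (hc : 0 ≤ c) (hcb : c ≤ b) (hba : b ≤ a) :
    0 ≤ a*(a-b)*(a-c) + b*(b-a)*(b-c) + c*(c-a)*(c-b) := by
  nlinarith [mul_nonneg (mul_self_nonneg (a-b)) (by linarith : (0:ℝ) ≤ a+b-c),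
             mul_nonneg hc (mul_nonneg (by linarith : (0:ℝ) ≤ a-c) (by linarith : (0:ℝ) ≤ b-c))]

private lemma schur3 (a b c : ℝ) (ha : 0 ≤ a) (hb : 0 ≤ b) (hc : 0 ≤ c) :
    0 ≤ a*(a-b)*(a-c) + b*(b-a)*(b-c) + c*(c-a)*(c-b) := by
  rcases le_total a b with h1 | h1 <;> rcases le_total b c with h2 | h2 <;>
    rcases le_total a c with h3 | h3
  · linarith [schur_sorted c b a ha h1 h2]
  · linarith [schur_sorted c b a ha h1 h2]
  · linarith [schur_sorted b c a ha h3 h2]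
  · linarith [schur_sorted b a c hc h3 h1]
  · linarith [schur_sorted c a b hb h1 h3]
  · linarith [schur_sorted a c b hb h2 h3]
  · linarith [schur_sorted a b c hc h2 h1]
  · linarith [schur_sorted a b c hc h2 h1]

set_option maxHeartbeats 2000000 in
private lemma main_aux (n₁ n₂ n₃ g s rp rm r : ℝ) (hunit : n₁^2 + n₂^2 + n₃^2 = 1)
    (hg2 : g^2 = 1 - 4*(n₁^2*n₂^2 + n₂^2*n₃^2 + n₃^2*n₁^2) + 9*n₁^2*n₂^2*n₃^2)
    (h1 : n₂^2 - n₃^2 + g ≠ 0) (h2 : n₃^2 - n₁^2 + g ≠ 0) (h3 : n₁^2 - n₂^2 + g ≠ 0)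
    (h4 : n₂^2 - n₃^2 + -g ≠ 0) (h5 : n₃^2 - n₁^2 + -g ≠ 0) (h6 : n₁^2 - n₂^2 + -g ≠ 0)
    (hrp : rp^2 * ((n₁/(n₂^2-n₃^2+g))^2 + (n₂/(n₃^2-n₁^2+g))^2 + (n₃/(n₁^2-n₂^2+g))^2) = 1)
    (hrm : rm^2 * ((n₁/(n₂^2-n₃^2+ -g))^2 + (n₂/(n₃^2-n₁^2+ -g))^2 + (n₃/(n₁^2-n₂^2+ -g))^2) = 1)
    (hs : s^2 = 1) :
    (n₃^2-n₂^2)*(r*(rm*(n₁/(n₂^2-n₃^2+ -g)) - s*(rp*(n₁/(n₂^2-n₃^2+g)))))^2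
    + (n₁^2-n₃^2)*(r*(rm*(n₂/(n₃^2-n₁^2+ -g)) - s*(rp*(n₂/(n₃^2-n₁^2+g)))))^2
    + (n₂^2-n₁^2)*(r*(rm*(n₃/(n₁^2-n₂^2+ -g)) - s*(rp*(n₃/(n₁^2-n₂^2+g)))))^2 = 0
    ∧
    (n₃^2-n₂^2)*(r*(rm*(n₁/(n₂^2-n₃^2+ -g)) + s*(rp*(n₁/(n₂^2-n₃^2+g)))))^2
    + (n₁^2-n₃^2)*(r*(rm*(n₂/(n₃^2-n₁^2+ -g)) + s*(rp*(n₂/(n₃^2-n₁^2+g)))))^2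
    + (n₂^2-n₁^2)*(r*(rm*(n₃/(n₁^2-n₂^2+ -g)) + s*(rp*(n₃/(n₁^2-n₂^2+g)))))^2 = 0 := by
  have hX1 : (n₂^2-n₃^2+g) * (n₂^2-n₃^2+g)⁻¹ = 1 := mul_inv_cancel₀ h1
  have hX2 : (n₃^2-n₁^2+g) * (n₃^2-n₁^2+g)⁻¹ = 1 := mul_inv_cancel₀ h2
  have hX3 : (n₁^2-n₂^2+g) * (n₁^2-n₂^2+g)⁻¹ = 1 := mul_inv_cancel₀ h3
  have hY1 : (n₂^2-n₃^2+ -g) * (n₂^2-n₃^2+ -g)⁻¹ = 1 := mul_inv_cancel₀ h4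
  have hY2 : (n₃^2-n₁^2+ -g) * (n₃^2-n₁^2+ -g)⁻¹ = 1 := mul_inv_cancel₀ h5
  have hY3 : (n₁^2-n₂^2+ -g) * (n₁^2-n₂^2+ -g)⁻¹ = 1 := mul_inv_cancel₀ h6
  have hMx : n₁^2/(n₂^2-n₃^2+g) + n₂^2/(n₃^2-n₁^2+g) + n₃^2/(n₁^2-n₂^2+g) = 0 := by
    field_simp
    linear_combination (n₃^2 + n₂^2 + n₁^2) * hg2 + ((-1:ℝ)*n₃^2 + (-1:ℝ)*n₃^4 + (-1:ℝ)*n₂^2 + (-2:ℝ)*n₂^2*n₃^2 + (-1:ℝ)*n₂^4 + (-1:ℝ)*n₁^2 + (-2:ℝ)*n₁^2*n₃^2 + (-2:ℝ)*n₁^2*n₂^2 + (9:ℝ)*n₁^2*n₂^2*n₃^2 + (-1:ℝ)*n₁^4) * hunit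
  have hMy : n₁^2/(n₂^2-n₃^2+ -g) + n₂^2/(n₃^2-n₁^2+ -g) + n₃^2/(n₁^2-n₂^2+ -g) = 0 := by
    field_simp
    linear_combination (n₃^2 + n₂^2 + n₁^2) * hg2 + ((-1:ℝ)*n₃^2 + (-1:ℝ)*n₃^4 + (-1:ℝ)*n₂^2 + (-2:ℝ)*n₂^2*n₃^2 + (-1:ℝ)*n₂^4 + (-1:ℝ)*n₁^2 + (-2:ℝ)*n₁^2*n₃^2 + (-2:ℝ)*n₁^2*n₂^2 + (9:ℝ)*n₁^2*n₂^2*n₃^2 + (-1:ℝ)*n₁^4) * hunit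
  have hB0 : (n₃^2-n₂^2)*(n₁/(n₂^2-n₃^2+ -g))*(n₁/(n₂^2-n₃^2+g))
      + (n₁^2-n₃^2)*(n₂/(n₃^2-n₁^2+ -g))*(n₂/(n₃^2-n₁^2+g))
      + (n₂^2-n₁^2)*(n₃/(n₁^2-n₂^2+ -g))*(n₃/(n₁^2-n₂^2+g)) = 0 := by
    field_simp
    linear_combination ((-1:ℝ)*n₂^2*n₃^6 + n₂^6*n₃^2 + n₁^2*n₃^6 + (-1:ℝ)*n₁^2*n₂^6 + (-1:ℝ)*n₁^6*n₃^2 + n₁^6*n₂^2) * hg2 + (n₂^2*n₃^6 + n₂^2*n₃^8 + n₂^4*n₃^6 + (-1:ℝ)*n₂^6*n₃^2 + (-1:ℝ)*n₂^6*n₃^4 + (-1:ℝ)*n₂^8*n₃^2 + (-1:ℝ)*n₁^2*n₃^6 + (-1:ℝ)*n₁^2*n₃^8 + (-9:ℝ)*n₁^2*n₂^4*n₃^6 + n₁^2*n₂^6 + (9:ℝ)*n₁^2*n₂^6*n₃^4 + n₁^2*n₂^8 + (-1:ℝ)*n₁^4*n₃^6 + (9:ℝ)*n₁^4*n₂^2*n₃^6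 + n₁^4*n₂^6 + (-9:ℝ)*n₁^4*n₂^6*n₃^2 + n₁^6*n₃^2 + n₁^6*n₃^4 + (-1:ℝ)*n₁^6*n₂^2 + (-9:ℝ)*n₁^6*n₂^2*n₃^4 + (-1:ℝ)*n₁^6*n₂^4 + (9:ℝ)*n₁^6*n₂^4*n₃^2 + n₁^8*n₃^2 + (-1:ℝ)*n₁^8*n₂^2) * hunit
  have hFp : (n₃^2-n₂^2)*(rp*(n₁/(n₂^2-n₃^2+g)))^2 + (n₁^2-n₃^2)*(rp*(n₂/(n₃^2-n₁^2+g)))^2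
      + (n₂^2-n₁^2)*(rp*(n₃/(n₁^2-n₂^2+g)))^2 = g := by
    linear_combination g * hrp - rp^2 * hMx - (rp^2*n₁^2*(n₂^2-n₃^2+g)⁻¹) * hX1
      - (rp^2*n₂^2*(n₃^2-n₁^2+g)⁻¹) * hX2 - (rp^2*n₃^2*(n₁^2-n₂^2+g)⁻¹) * hX3
  have hFm : (n₃^2-n₂^2)*(rm*(n₁/(n₂^2-n₃^2+ -g)))^2 + (n₁^2-n₃^2)*(rm*(n₂/(n₃^2-n₁^2+ -g)))^2
      + (n₂^2-n₁^2)*(rm*(n₃/(n₁^2-n₂^2+ -g)))^2 = -g := by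
    linear_combination (-g) * hrm - rm^2 * hMy - (rm^2*n₁^2*(n₂^2-n₃^2+ -g)⁻¹) * hY1
      - (rm^2*n₂^2*(n₃^2-n₁^2+ -g)⁻¹) * hY2 - (rm^2*n₃^2*(n₁^2-n₂^2+ -g)⁻¹) * hY3
  constructor
  · linear_combination r^2*hFm + r^2*s^2*hFp + g*r^2*hs - 2*s*r^2*rm*rp*hB0
  · linear_combination r^2*hFm + r^2*s^2*hFp + g*r^2*hs + 2*s*r^2*rm*rp*hB0

/-- f(v₁(n)) = 0, f(v₂(n)) = 0, and the determinant of the matrix of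
squared components of n, v₁(n), v₂(n) vanishes. -/
theorem stmt1 (n₁ n₂ n₃ : ℝ) (hunit : n₁^2 + n₂^2 + n₃^2 = 1)
    (h1 : n₂^2 - n₃^2 + gfun n₁ n₂ n₃ ≠ 0)
    (h2 : n₃^2 - n₁^2 + gfun n₁ n₂ n₃ ≠ 0)
    (h3 : n₁^2 - n₂^2 + gfun n₁ n₂ n₃ ≠ 0)
    (h4 : n₂^2 - n₃^2 - gfun n₁ n₂ n₃ ≠ 0)
    (h5 : n₃^2 - n₁^2 - gfun n₁ n₂ n₃ ≠ 0)
    (h6 : n₁^2 - n₂^2 - gfun n₁ n₂ n₃ ≠ 0)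
    (hprod : n₁ * n₂ * n₃ ≠ 0)
    (ht1 : n₁^2 ≠ 1/3) (ht2 : n₂^2 ≠ 1/3) (ht3 : n₃^2 ≠ 1/3) :
    ffun n₁ n₂ n₃ (v1 n₁ n₂ n₃) = 0 ∧
    ffun n₁ n₂ n₃ (v2 n₁ n₂ n₃) = 0 ∧
    Matrix.det
      !![n₁^2, n₂^2, n₃^2;
         (v1 n₁ n₂ n₃).1^2, (v1 n₁ n₂ n₃).2.1^2, (v1 n₁ n₂ n₃).2.2^2;
         (v2 n₁ n₂ n₃).1^2, (v2 n₁ n₂ n₃).2.1^2, (v2 n₁ n₂ n₃).2.2^2] = 0 := by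
  have hn1 : n₁ ≠ 0 := fun h => hprod (by simp [h])
  have hn2 : n₂ ≠ 0 := fun h => hprod (by simp [h])
  have hn3 : n₃ ≠ 0 := fun h => hprod (by simp [h])
  have hrad : 0 ≤ 1 - 4*(n₁^2*n₂^2 + n₂^2*n₃^2 + n₃^2*n₁^2) + 9*n₁^2*n₂^2*n₃^2 := by
    have h := schur3 (n₁^2) (n₂^2) (n₃^2) (sq_nonneg n₁) (sq_nonneg n₂) (sq_nonneg n₃)
    have hEq : 1 - 4*(n₁^2*n₂^2 + n₂^2*n₃^2 + n₃^2*n₁^2) + 9*n₁^2*n₂^2*n₃^2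
        = n₁^2*(n₁^2-n₂^2)*(n₁^2-n₃^2) + n₂^2*(n₂^2-n₁^2)*(n₂^2-n₃^2)
          + n₃^2*(n₃^2-n₁^2)*(n₃^2-n₂^2) := by
      linear_combination ((-1:ℝ) + (-1:ℝ)*n₃^2 + (-1:ℝ)*n₃^4 + (-1:ℝ)*n₂^2 + (2:ℝ)*n₂^2*n₃^2 + (-1:ℝ)*n₂^4 + (-1:ℝ)*n₁^2 + (2:ℝ)*n₁^2*n₃^2 + (2:ℝ)*n₁^2*n₂^2 + (-1:ℝ)*n₁^4) * hunit
    rw [hEq]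
    exact h
  have hg2 : gfun n₁ n₂ n₃ ^ 2
      = 1 - 4*(n₁^2*n₂^2 + n₂^2*n₃^2 + n₃^2*n₁^2) + 9*n₁^2*n₂^2*n₃^2 := by
    rw [gfun]; exact Real.sq_sqrt hrad
  have h4' : n₂^2 - n₃^2 + -gfun n₁ n₂ n₃ ≠ 0 := fun h => h4 (by linarith)
  have h5' : n₃^2 - n₁^2 + -gfun n₁ n₂ n₃ ≠ 0 := fun h => h5 (by linarith)
  have h6' : n₁^2 - n₂^2 + -gfun n₁ n₂ n₃ ≠ 0 := fun h => h6 (by linarith)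
  have sqpos : ∀ x : ℝ, x ≠ 0 → 0 < x^2 := fun x hx =>
    lt_of_le_of_ne (sq_nonneg x) (Ne.symm (pow_ne_zero 2 hx))
  have hNx : 0 < n₁^2/(n₂^2-n₃^2+gfun n₁ n₂ n₃)^2 + n₂^2/(n₃^2-n₁^2+gfun n₁ n₂ n₃)^2
      + n₃^2/(n₁^2-n₂^2+gfun n₁ n₂ n₃)^2 := by
    have t1 := div_pos (sqpos n₁ hn1) (sqpos _ h1)
    have t2 := div_pos (sqpos n₂ hn2) (sqpos _ h2)
    have t3 := div_pos (sqpos n₃ hn3) (sqpos _ h3)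
    linarith
  have hNy : 0 < n₁^2/(n₂^2-n₃^2+ -gfun n₁ n₂ n₃)^2 + n₂^2/(n₃^2-n₁^2+ -gfun n₁ n₂ n₃)^2
      + n₃^2/(n₁^2-n₂^2+ -gfun n₁ n₂ n₃)^2 := by
    have t1 := div_pos (sqpos n₁ hn1) (sqpos _ h4')
    have t2 := div_pos (sqpos n₂ hn2) (sqpos _ h5')
    have t3 := div_pos (sqpos n₃ hn3) (sqpos _ h6')
    linarith
  have hrp : (rho n₁ n₂ n₃ (gfun n₁ n₂ n₃))^2 * ((n₁/(n₂^2-n₃^2+gfun n₁ n₂ n₃))^2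
      + (n₂/(n₃^2-n₁^2+gfun n₁ n₂ n₃))^2 + (n₃/(n₁^2-n₂^2+gfun n₁ n₂ n₃))^2) = 1 := by
    rw [rho, div_pow, one_pow, Real.sq_sqrt hNx.le, div_pow, div_pow, div_pow]
    exact one_div_mul_cancel hNx.ne'
  have hrm : (rho n₁ n₂ n₃ (-gfun n₁ n₂ n₃))^2 * ((n₁/(n₂^2-n₃^2+ -gfun n₁ n₂ n₃))^2
      + (n₂/(n₃^2-n₁^2+ -gfun n₁ n₂ n₃))^2 + (n₃/(n₁^2-n₂^2+ -gfun n₁ n₂ n₃))^2) = 1 := by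
    rw [rho, div_pow, one_pow, Real.sq_sqrt hNy.le, div_pow, div_pow, div_pow]
    exact one_div_mul_cancel hNy.ne'
  have hs2 : (sfun n₁ n₂ n₃)^2 = 1 := by
    have hx : n₁*n₂*n₃*(n₁^2 - 1/3)*(n₂^2 - 1/3)*(n₃^2 - 1/3) ≠ 0 :=
      mul_ne_zero (mul_ne_zero (mul_ne_zero hprod (sub_ne_zero_of_ne ht1))
        (sub_ne_zero_of_ne ht2)) (sub_ne_zero_of_ne ht3)
    rw [sfun]
    rcases hx.lt_or_gt with h | h
    · rw [Real.sign_of_neg h]; norm_num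
    · rw [Real.sign_of_pos h]; norm_num
  obtain ⟨k1, k2⟩ := main_aux n₁ n₂ n₃ (gfun n₁ n₂ n₃) (sfun n₁ n₂ n₃)
    (rho n₁ n₂ n₃ (gfun n₁ n₂ n₃)) (rho n₁ n₂ n₃ (-gfun n₁ n₂ n₃)) (1/Real.sqrt 2)
    hunit hg2 h1 h2 h3 h4' h5' h6' hrp hrm hs2
  have hf1 : ffun n₁ n₂ n₃ (v1 n₁ n₂ n₃) = 0 := by
    simp only [ffun, v1, smul3, sub3, uminus, uplus, uvec]
    linear_combination k1
  have hf2 : ffun n₁ n₂ n₃ (v2 n₁ n₂ n₃) = 0 := by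
    simp only [ffun, v2, smul3, add3, uminus, uplus, uvec]
    linear_combination k2
  refine ⟨hf1, hf2, ?_⟩
  apply Matrix.exists_mulVec_eq_zero_iff.mp
  refine ⟨![n₃^2-n₂^2, n₁^2-n₃^2, n₂^2-n₁^2], ?_, ?_⟩
  · intro h
    have e0 := congrFun h 0
    have e1 := congrFun h 1
    simp only [Matrix.cons_val_zero, Matrix.cons_val_one, Matrix.head_cons, Pi.zero_apply] at e0 e1
    exact ht1 (by linarith)
  · simp only [ffun] at hf1 hf2
    funext i
    fin_cases i <;>
      simp [Matrix.mulVec, dotProduct, Fin.sum_univ_three] <;>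
      [skip; skip; skip]
    · ring
    · linear_combination hf1
    · linear_combination hf2
end
end

section
/- Let n = (n₁,n₂,n₃) be a unit vector in ℝ³ such that the six real numbers n₂²−n₃²±g(n), n₃²−n₁²±g(n), n₁²−n₂²±g(n) are all nonzero, and suppose n₁n₂n₃ ≠ 0 and nᵢ² ≠ 1/3 for i = 1,2,3. Then the scalar triple product satisfies ⟨n, v₁(n) × v₂(n)⟩ = 1; in particular {n, v₁(n), v₂(n)} is a positively oriented orthonormal basis of ℝ³. -/
noncomputable section

/-- Cross product on ℝ³, vectors as triples. -/
def cross3 (x y : ℝ × ℝ × ℝ) : ℝ × ℝ × ℝ :=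
  (x.2.1 * y.2.2 - x.2.2 * y.2.1,
   x.2.2 * y.1 - x.1 * y.2.2,
   x.1 * y.2.1 - x.2.1 * y.1)

/-! With `a, b, c = n₁², n₂², n₃²` (so `a + b + c = 1`) and `e = ±g(n)`, everything rests on the
factorisation `(b - c - e)(b - c + e) = -a (1 - 3b)(1 - 3c)`, for which the radicand of `g(n)`, a
Schur expression, must be nonnegative. It turns each `1 / (nⱼ² - nₖ² ± g)` into a polynomial over
`nᵢ² (1 - 3nⱼ²)(1 - 3nₖ²)`; this makes `u₋` and `u₊` orthogonal and gives the triple product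
`[n, u₋, u₊] · w = 2 ρ₋ ρ₊ g / 27`, where `w = n₁n₂n₃ ∏ (nᵢ² - 1/3)` and `ρ±` are the normalising
factors. As `n, u₋, u₊` are orthonormal, `[n, u₋, u₊] = ±1`, so it equals `sign w = s(n)`; and
`v₁, v₂` are `u₋, s(n) u₊` rotated by `π/4`. -/

theorem schur_nonneg {a b c : ℝ} (ha : 0 ≤ a) (hb : 0 ≤ b) (hc : 0 ≤ c) :
    0 ≤ a * (a - b) * (a - c) + b * (b - a) * (b - c) + c * (c - a) * (c - b) := by
  wlog hba : b ≤ a generalizing a b c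
  · linarith [this hb ha hc (le_of_not_ge hba)]
  wlog hcb : c ≤ b generalizing a b c
  · rcases le_total c a with hca | hac
    · linarith [this ha hc hb hca (le_of_not_ge hcb)]
    · linarith [this hc ha hb hac hba]
  have key : a * (a - b) * (a - c) + b * (b - a) * (b - c) + c * (c - a) * (c - b)
      = (a - b) ^ 2 * (a + b - c) + c * (a - c) * (b - c) := by ring
  rw [key]
  exact add_nonneg (mul_nonneg (sq_nonneg _) (by linarith))
    (mul_nonneg (mul_nonneg hc (by linarith)) (by linarith))

theorem gfun_sq {n₁ n₂ n₃ : ℝ} (hunit : n₁^2 + n₂^2 + n₃^2 = 1) :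
    gfun n₁ n₂ n₃ ^ 2 = 1 - 4*(n₁^2*n₂^2 + n₂^2*n₃^2 + n₃^2*n₁^2) + 9*n₁^2*n₂^2*n₃^2 := by
  refine Real.sq_sqrt ?_
  set a := n₁^2
  set b := n₂^2
  set c := n₃^2
  have hschur : 1 - 4*(a*b + b*c + c*a) + 9*a*b*c
      = a * (a - b) * (a - c) + b * (b - a) * (b - c) + c * (c - a) * (c - b) := by
    linear_combination (-(1 + (a + b + c) + (a + b + c)^2 - 4 * (a*b + b*c + c*a))) * hunit
  rw [hschur]
  exact schur_nonneg (sq_nonneg n₁) (sq_nonneg n₂) (sq_nonneg n₃)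

theorem Real.sign_mul_eq_one_of_mul_pos {t w : ℝ} (ht : t ^ 2 = 1) (htw : 0 < t * w) :
    Real.sign w * t = 1 := by
  rcases sq_eq_one_iff.1 ht with rfl | rfl
  · rw [Real.sign_of_pos (by linarith), one_mul]
  · rw [Real.sign_of_neg (by linarith)]
    norm_num

section Denominators

variable {a b c e : ℝ}

theorem conj_denoms_mul_eq (hs : a + b + c = 1)
    (he : e ^ 2 = 1 - 4 * (a * b + b * c + c * a) + 9 * a * b * c) :
    (b - c + -e) * (b - c + e) = -(a * ((1 - 3 * b) * (1 - 3 * c))) := by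
  obtain rfl : c = 1 - a - b := by linarith
  linear_combination -he

theorem conj_denoms_mul_eq_cyclic (hs : a + b + c = 1)
    (he : e ^ 2 = 1 - 4 * (a * b + b * c + c * a) + 9 * a * b * c) :
    (b - c + -e) * (b - c + e) = -(a * ((1 - 3 * b) * (1 - 3 * c))) ∧
    (c - a + -e) * (c - a + e) = -(b * ((1 - 3 * c) * (1 - 3 * a))) ∧
    (a - b + -e) * (a - b + e) = -(c * ((1 - 3 * a) * (1 - 3 * b))) :=
  ⟨conj_denoms_mul_eq hs he,
    conj_denoms_mul_eq (by linarith) (by linear_combination he),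
    conj_denoms_mul_eq (by linarith) (by linear_combination he)⟩

theorem sum_div_denoms_eq_zero (hs : a + b + c = 1)
    (he : e ^ 2 = 1 - 4 * (a * b + b * c + c * a) + 9 * a * b * c)
    (hX : b - c + e ≠ 0) (hY : c - a + e ≠ 0) (hZ : a - b + e ≠ 0) :
    a / (b - c + e) + b / (c - a + e) + c / (a - b + e) = 0 := by
  rw [div_add_div _ _ hX hY, div_add_div _ _ (mul_ne_zero hX hY) hZ, div_eq_zero_iff]
  left
  obtain rfl : c = 1 - a - b := by linarith
  linear_combination he

theorem sum_div_conj_denoms_eq_zero (hs : a + b + c = 1)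
    (he : e ^ 2 = 1 - 4 * (a * b + b * c + c * a) + 9 * a * b * c)
    (hX : (b - c + -e) * (b - c + e) ≠ 0) (hY : (c - a + -e) * (c - a + e) ≠ 0)
    (hZ : (a - b + -e) * (a - b + e) ≠ 0) :
    a / ((b - c + -e) * (b - c + e)) + b / ((c - a + -e) * (c - a + e))
      + c / ((a - b + -e) * (a - b + e)) = 0 := by
  obtain ⟨hA, hB, hC⟩ := conj_denoms_mul_eq_cyclic hs he
  rw [hA] at hX ⊢
  rw [hB] at hY ⊢
  rw [hC] at hZ ⊢
  -- named, so that `field_simp` sees the factors `1 - 3a, 1 - 3b, 1 - 3c` as nonzero atoms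
  generalize hta : 1 - 3 * a = ta at *
  generalize htb : 1 - 3 * b = tb at *
  generalize htc : 1 - 3 * c = tc at *
  simp only [neg_ne_zero, mul_ne_zero_iff] at hX hY hZ
  obtain ⟨ha, htb0, htc0⟩ := hX
  obtain ⟨hb, -, hta0⟩ := hY
  obtain ⟨hc, -, -⟩ := hZ
  field_simp
  linear_combination hta + htb + htc + 3 * hs

theorem inv_eq_div_and_inv_eq_div {p q m : ℝ} (h : p * q = m) (hm : m ≠ 0) :
    p⁻¹ = q / m ∧ q⁻¹ = p / m := by
  subst h
  have hp := left_ne_zero_of_mul hm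
  have hq := right_ne_zero_of_mul hm
  constructor <;> field_simp

theorem cross_inv_denoms_mul_eq (hs : a + b + c = 1)
    (he : e ^ 2 = 1 - 4 * (a * b + b * c + c * a) + 9 * a * b * c)
    (hX : (b - c + -e) * (b - c + e) ≠ 0) (hY : (c - a + -e) * (c - a + e) ≠ 0)
    (hZ : (a - b + -e) * (a - b + e) ≠ 0) :
    ((c - a + -e)⁻¹ * (a - b + e)⁻¹ - (a - b + -e)⁻¹ * (c - a + e)⁻¹
      + (a - b + -e)⁻¹ * (b - c + e)⁻¹ - (b - c + -e)⁻¹ * (a - b + e)⁻¹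
      + (b - c + -e)⁻¹ * (c - a + e)⁻¹ - (c - a + -e)⁻¹ * (b - c + e)⁻¹)
      * (a * b * c * ((a - 1/3) * (b - 1/3) * (c - 1/3))) = 2 / 27 * e := by
  obtain ⟨hA, hB, hC⟩ := conj_denoms_mul_eq_cyclic hs he
  obtain ⟨hp₁, hq₁⟩ := inv_eq_div_and_inv_eq_div hA (hA ▸ hX)
  obtain ⟨hp₂, hq₂⟩ := inv_eq_div_and_inv_eq_div hB (hB ▸ hY)
  obtain ⟨hp₃, hq₃⟩ := inv_eq_div_and_inv_eq_div hC (hC ▸ hZ)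
  rw [hp₁, hq₁, hp₂, hq₂, hp₃, hq₃, show a - 1/3 = -(1 - 3 * a) / 3 by ring,
    show b - 1/3 = -(1 - 3 * b) / 3 by ring, show c - 1/3 = -(1 - 3 * c) / 3 by ring]
  rw [hA] at hX
  rw [hB] at hY
  rw [hC] at hZ
  clear hp₁ hq₁ hp₂ hq₂ hp₃ hq₃ hA hB hC
  generalize hta : 1 - 3 * a = ta at *
  generalize htb : 1 - 3 * b = tb at *
  generalize htc : 1 - 3 * c = tc at *
  simp only [neg_ne_zero, mul_ne_zero_iff] at hX hY hZ
  obtain ⟨ha, htb0, htc0⟩ := hX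
  obtain ⟨hb, -, hta0⟩ := hY
  obtain ⟨hc, -, -⟩ := hZ
  field_simp
  subst hta htb htc
  obtain rfl : c = 1 - a - b := by linarith
  ring

end Denominators

theorem dot3_cross3_sq_eq_one {x y z : ℝ × ℝ × ℝ} (hxx : dot3 x x = 1) (hyy : dot3 y y = 1)
    (hzz : dot3 z z = 1) (hxy : dot3 x y = 0) (hxz : dot3 x z = 0) (hyz : dot3 y z = 0) :
    dot3 x (cross3 y z) ^ 2 = 1 := by
  have gram : dot3 x (cross3 y z) ^ 2
      = dot3 x x * dot3 y y * dot3 z z + 2 * dot3 x y * dot3 y z * dot3 x z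
        - dot3 x x * dot3 y z ^ 2 - dot3 y y * dot3 x z ^ 2 - dot3 z z * dot3 x y ^ 2 := by
    simp only [dot3, cross3]
    ring
  rw [gram, hxx, hyy, hzz, hxy, hxz, hyz]
  norm_num

theorem frame_of_orthonormal {n p q v w : ℝ × ℝ × ℝ} {s : ℝ}
    (hnn : dot3 n n = 1) (hpp : dot3 p p = 1) (hqq : dot3 q q = 1)
    (hnp : dot3 n p = 0) (hnq : dot3 n q = 0) (hpq : dot3 p q = 0)
    (hs : s * dot3 n (cross3 p q) = 1)
    (hv : v = smul3 (1 / √2) (sub3 p (smul3 s q)))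
    (hw : w = smul3 (1 / √2) (add3 p (smul3 s q))) :
    dot3 n (cross3 v w) = 1 ∧ dot3 n v = 0 ∧ dot3 n w = 0 ∧
    dot3 v w = 0 ∧ dot3 v v = 1 ∧ dot3 w w = 1 := by
  have hs2 : s ^ 2 = 1 := by
    linear_combination (-s ^ 2) * dot3_cross3_sq_eq_one hnn hpp hqq hnp hnq hpq
      + (s * dot3 n (cross3 p q) + 1) * hs
  have hr : (1 / √2) ^ 2 = 1 / 2 := by
    rw [div_pow, one_pow, Real.sq_sqrt zero_le_two]
  subst hv hw
  refine ⟨?_, ?_, ?_, ?_, ?_, ?_⟩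
  · calc _ = (1 / √2) ^ 2 * (2 * (s * dot3 n (cross3 p q))) := by
          simp only [dot3, cross3, smul3, sub3, add3]; ring
      _ = 1 := by rw [hs, hr]; norm_num
  · calc _ = 1 / √2 * (dot3 n p - s * dot3 n q) := by
          simp only [dot3, smul3, sub3]; ring
      _ = 0 := by rw [hnp, hnq]; ring
  · calc _ = 1 / √2 * (dot3 n p + s * dot3 n q) := by
          simp only [dot3, smul3, add3]; ring
      _ = 0 := by rw [hnp, hnq]; ring
  · calc _ = (1 / √2) ^ 2 * (dot3 p p - s ^ 2 * dot3 q q) := by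
          simp only [dot3, smul3, sub3, add3]; ring
      _ = 0 := by rw [hpp, hqq, hs2]; ring
  · calc _ = (1 / √2) ^ 2 * (dot3 p p - 2 * s * dot3 p q + s ^ 2 * dot3 q q) := by
          simp only [dot3, smul3, sub3]; ring
      _ = 1 := by rw [hpp, hpq, hqq, hs2, hr]; norm_num
  · calc _ = (1 / √2) ^ 2 * (dot3 p p + 2 * s * dot3 p q + s ^ 2 * dot3 q q) := by
          simp only [dot3, smul3, add3]; ring
      _ = 1 := by rw [hpp, hpq, hqq, hs2, hr]; norm_num

section UnitVectors

variable {n₁ n₂ n₃ e : ℝ}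

theorem rho_pos (hn₁ : n₁ ≠ 0) (hX : n₂^2 - n₃^2 + e ≠ 0) : 0 < rho n₁ n₂ n₃ e := by
  unfold rho
  positivity

theorem dot3_uvec_self (hn₁ : n₁ ≠ 0) (hX : n₂^2 - n₃^2 + e ≠ 0) :
    dot3 (uvec n₁ n₂ n₃ e) (uvec n₁ n₂ n₃ e) = 1 := by
  have hS : 0 < n₁^2/(n₂^2-n₃^2+e)^2 + n₂^2/(n₃^2-n₁^2+e)^2 + n₃^2/(n₁^2-n₂^2+e)^2 := by
    positivity
  calc _ = rho n₁ n₂ n₃ e ^ 2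
        * ((n₁/(n₂^2-n₃^2+e))^2 + (n₂/(n₃^2-n₁^2+e))^2 + (n₃/(n₁^2-n₂^2+e))^2) := by
        simp only [uvec, dot3]; ring
    _ = 1 := by
        rw [div_pow, div_pow, div_pow, rho, div_pow, one_pow, Real.sq_sqrt hS.le, one_div,
          inv_mul_cancel₀ hS.ne']

theorem dot3_uvec (hunit : n₁^2 + n₂^2 + n₃^2 = 1)
    (he : e ^ 2 = 1 - 4*(n₁^2*n₂^2 + n₂^2*n₃^2 + n₃^2*n₁^2) + 9*n₁^2*n₂^2*n₃^2)
    (hX : n₂^2 - n₃^2 + e ≠ 0) (hY : n₃^2 - n₁^2 + e ≠ 0) (hZ : n₁^2 - n₂^2 + e ≠ 0) :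
    dot3 (n₁, n₂, n₃) (uvec n₁ n₂ n₃ e) = 0 := by
  calc _ = rho n₁ n₂ n₃ e
        * (n₁^2/(n₂^2-n₃^2+e) + n₂^2/(n₃^2-n₁^2+e) + n₃^2/(n₁^2-n₂^2+e)) := by
        simp only [uvec, dot3]; ring
    _ = 0 := by rw [sum_div_denoms_eq_zero hunit he hX hY hZ, mul_zero]

theorem dot3_uvec_neg_uvec (hunit : n₁^2 + n₂^2 + n₃^2 = 1)
    (he : e ^ 2 = 1 - 4*(n₁^2*n₂^2 + n₂^2*n₃^2 + n₃^2*n₁^2) + 9*n₁^2*n₂^2*n₃^2)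
    (hX : (n₂^2 - n₃^2 + -e) * (n₂^2 - n₃^2 + e) ≠ 0)
    (hY : (n₃^2 - n₁^2 + -e) * (n₃^2 - n₁^2 + e) ≠ 0)
    (hZ : (n₁^2 - n₂^2 + -e) * (n₁^2 - n₂^2 + e) ≠ 0) :
    dot3 (uvec n₁ n₂ n₃ (-e)) (uvec n₁ n₂ n₃ e) = 0 := by
  calc _ = rho n₁ n₂ n₃ (-e) * rho n₁ n₂ n₃ e
        * (n₁^2 / (n₂^2 - n₃^2 + -e) / (n₂^2 - n₃^2 + e)
          + n₂^2 / (n₃^2 - n₁^2 + -e) / (n₃^2 - n₁^2 + e)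
          + n₃^2 / (n₁^2 - n₂^2 + -e) / (n₁^2 - n₂^2 + e)) := by
        simp only [uvec, dot3]; ring
    _ = 0 := by
        rw [div_div, div_div, div_div, sum_div_conj_denoms_eq_zero hunit he hX hY hZ, mul_zero]

theorem dot3_cross3_uvec_mul (hunit : n₁^2 + n₂^2 + n₃^2 = 1)
    (he : e ^ 2 = 1 - 4*(n₁^2*n₂^2 + n₂^2*n₃^2 + n₃^2*n₁^2) + 9*n₁^2*n₂^2*n₃^2)
    (hX : (n₂^2 - n₃^2 + -e) * (n₂^2 - n₃^2 + e) ≠ 0)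
    (hY : (n₃^2 - n₁^2 + -e) * (n₃^2 - n₁^2 + e) ≠ 0)
    (hZ : (n₁^2 - n₂^2 + -e) * (n₁^2 - n₂^2 + e) ≠ 0) :
    dot3 (n₁, n₂, n₃) (cross3 (uvec n₁ n₂ n₃ (-e)) (uvec n₁ n₂ n₃ e))
        * (n₁*n₂*n₃*(n₁^2 - 1/3)*(n₂^2 - 1/3)*(n₃^2 - 1/3))
      = 2 / 27 * (rho n₁ n₂ n₃ (-e) * rho n₁ n₂ n₃ e) * e := by
  rw [show 2 / 27 * (rho n₁ n₂ n₃ (-e) * rho n₁ n₂ n₃ e) * e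
      = rho n₁ n₂ n₃ (-e) * rho n₁ n₂ n₃ e * (2 / 27 * e) by ring,
    ← cross_inv_denoms_mul_eq hunit he hX hY hZ]
  simp only [uvec, dot3, cross3]
  ring

end UnitVectors

theorem stmt2_general (n₁ n₂ n₃ : ℝ) (hunit : n₁^2 + n₂^2 + n₃^2 = 1)
    (h1 : n₂^2 - n₃^2 + gfun n₁ n₂ n₃ ≠ 0)
    (h2 : n₃^2 - n₁^2 + gfun n₁ n₂ n₃ ≠ 0)
    (h3 : n₁^2 - n₂^2 + gfun n₁ n₂ n₃ ≠ 0)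
    (h4 : n₂^2 - n₃^2 - gfun n₁ n₂ n₃ ≠ 0)
    (h5 : n₃^2 - n₁^2 - gfun n₁ n₂ n₃ ≠ 0)
    (h6 : n₁^2 - n₂^2 - gfun n₁ n₂ n₃ ≠ 0)
    (hprod : n₁ * n₂ * n₃ ≠ 0) :
    dot3 (n₁, n₂, n₃) (cross3 (v1 n₁ n₂ n₃) (v2 n₁ n₂ n₃)) = 1 ∧
    dot3 (n₁, n₂, n₃) (v1 n₁ n₂ n₃) = 0 ∧
    dot3 (n₁, n₂, n₃) (v2 n₁ n₂ n₃) = 0 ∧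
    dot3 (v1 n₁ n₂ n₃) (v2 n₁ n₂ n₃) = 0 ∧
    dot3 (v1 n₁ n₂ n₃) (v1 n₁ n₂ n₃) = 1 ∧
    dot3 (v2 n₁ n₂ n₃) (v2 n₁ n₂ n₃) = 1 := by
  have hg := gfun_sq hunit
  have hng : (-gfun n₁ n₂ n₃) ^ 2 = _ := (neg_sq _).trans hg
  rw [sub_eq_add_neg] at h4 h5 h6
  have hn₁ : n₁ ≠ 0 := left_ne_zero_of_mul (left_ne_zero_of_mul hprod)
  have hX := mul_ne_zero h4 h1
  have hY := mul_ne_zero h5 h2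
  have hZ := mul_ne_zero h6 h3
  have hnn : dot3 (n₁, n₂, n₃) (n₁, n₂, n₃) = 1 := by
    simp only [dot3]; linear_combination hunit
  have hmm := dot3_uvec_self hn₁ h4
  have hpp := dot3_uvec_self hn₁ h1
  have hnm := dot3_uvec hunit hng h4 h5 h6
  have hnp := dot3_uvec hunit hg h1 h2 h3
  have hmp := dot3_uvec_neg_uvec hunit hg hX hY hZ
  -- `g = 0` would make `u₋ = u₊` a unit vector orthogonal to itself
  have hg0 : 0 < gfun n₁ n₂ n₃ := by
    refine (Real.sqrt_nonneg _).lt_of_ne' fun (h0 : gfun n₁ n₂ n₃ = 0) => ?_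
    rw [h0, neg_zero, dot3_uvec_self hn₁ (h0 ▸ h1)] at hmp
    exact one_ne_zero hmp
  have hsT := Real.sign_mul_eq_one_of_mul_pos (dot3_cross3_sq_eq_one hnn hmm hpp hnm hnp hmp)
    ((dot3_cross3_uvec_mul hunit hg hX hY hZ).symm ▸
      mul_pos (mul_pos (by norm_num) (mul_pos (rho_pos hn₁ h4) (rho_pos hn₁ h1))) hg0)
  exact frame_of_orthonormal hnn hmm hpp hnm hnp hmp hsT rfl rfl

/-- ⟨n, v₁(n) × v₂(n)⟩ = 1, and {n, v₁(n), v₂(n)} is a positively oriented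
orthonormal basis of ℝ³. -/
theorem stmt2 (n₁ n₂ n₃ : ℝ) (hunit : n₁^2 + n₂^2 + n₃^2 = 1)
    (h1 : n₂^2 - n₃^2 + gfun n₁ n₂ n₃ ≠ 0)
    (h2 : n₃^2 - n₁^2 + gfun n₁ n₂ n₃ ≠ 0)
    (h3 : n₁^2 - n₂^2 + gfun n₁ n₂ n₃ ≠ 0)
    (h4 : n₂^2 - n₃^2 - gfun n₁ n₂ n₃ ≠ 0)
    (h5 : n₃^2 - n₁^2 - gfun n₁ n₂ n₃ ≠ 0)
    (h6 : n₁^2 - n₂^2 - gfun n₁ n₂ n₃ ≠ 0)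
    (hprod : n₁ * n₂ * n₃ ≠ 0)
    (ht1 : n₁^2 ≠ 1/3) (ht2 : n₂^2 ≠ 1/3) (ht3 : n₃^2 ≠ 1/3) :
    dot3 (n₁, n₂, n₃) (cross3 (v1 n₁ n₂ n₃) (v2 n₁ n₂ n₃)) = 1 ∧
    dot3 (n₁, n₂, n₃) (v1 n₁ n₂ n₃) = 0 ∧
    dot3 (n₁, n₂, n₃) (v2 n₁ n₂ n₃) = 0 ∧
    dot3 (v1 n₁ n₂ n₃) (v2 n₁ n₂ n₃) = 0 ∧
    dot3 (v1 n₁ n₂ n₃) (v1 n₁ n₂ n₃) = 1 ∧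
    dot3 (v2 n₁ n₂ n₃) (v2 n₁ n₂ n₃) = 1 :=
  stmt2_general n₁ n₂ n₃ hunit h1 h2 h3 h4 h5 h6 hprod
end
end

section
/- Let σ₁, σ₂, σ₃ be reals with σ₁ + σ₂ + σ₃ = 0, and let n = (n₁,n₂,n₃) be a unit vector with σ_nn = σ₁n₁² + σ₂n₂² + σ₃n₃² = 0 and (n₁², n₂², n₃²) ≠ (1/3, 1/3, 1/3). If m = (m₁,m₂,m₃) ∈ ℝ³ satisfies f(m) = (n₃²−n₂²)m₁² + (n₁²−n₃²)m₂² + (n₂²−n₁²)m₃² = 0, then σ_mm = σ₁m₁² + σ₂m₂² + σ₃m₃² = 0. -/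
/-- in a state of pure shear, if σ_nn = 0 for a unit vector n with
(n₁²,n₂²,n₃²) ≠ (1/3,1/3,1/3), then f(m) = 0 implies σ_mm = 0. -/
theorem stmt3 (σ₁ σ₂ σ₃ n₁ n₂ n₃ m₁ m₂ m₃ : ℝ)
    (hshear : σ₁ + σ₂ + σ₃ = 0)
    (hunit : n₁^2 + n₂^2 + n₃^2 = 1)
    (hnn : σ₁ * n₁^2 + σ₂ * n₂^2 + σ₃ * n₃^2 = 0)
    (hne : (n₁^2, n₂^2, n₃^2) ≠ ((1:ℝ)/3, (1:ℝ)/3, (1:ℝ)/3))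
    (hf : (n₃^2 - n₂^2) * m₁^2 + (n₁^2 - n₃^2) * m₂^2 + (n₂^2 - n₁^2) * m₃^2 = 0) :
    σ₁ * m₁^2 + σ₂ * m₂^2 + σ₃ * m₃^2 = 0 := by
  by_cases hac : n₁^2 - n₃^2 = 0
  · -- then n₃² ≠ n₂², else all equal to 1/3
    have hcb : n₃^2 - n₂^2 ≠ 0 := by
      intro h
      apply hne
      have e1 : n₁^2 = 1/3 := by linarith
      have e2 : n₂^2 = 1/3 := by linarith
      have e3 : n₃^2 = 1/3 := by linarith
      rw [e1, e2, e3]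
    have key : (n₃^2 - n₂^2) * (σ₁ * m₁^2 + σ₂ * m₂^2 + σ₃ * m₃^2) = 0 := by
      linear_combination σ₁ * hf + (m₃^2 - m₂^2) * hnn
        + (n₃^2 * (m₂^2 - m₃^2) + (n₃^2 - n₂^2) * m₃^2) * hshear
    exact (mul_eq_zero.mp key).resolve_left hcb
  · have key : (n₁^2 - n₃^2) * (σ₁ * m₁^2 + σ₂ * m₂^2 + σ₃ * m₃^2) = 0 := by
      linear_combination σ₂ * hf + (m₁^2 - m₃^2) * hnn
        + (n₃^2 * (m₃^2 - m₁^2) + (n₁^2 - n₃^2) * m₃^2) * hshear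
    exact (mul_eq_zero.mp key).resolve_left hac
end

section
/- Let σ₁, σ₂, σ₃ be reals with σ₁ + σ₂ + σ₃ = 0. Let n = (n₁,n₂,n₃) be a unit vector in ℝ³ with σ_nn = σ₁n₁² + σ₂n₂² + σ₃n₃² = 0, such that the six real numbers n₂²−n₃²±g(n), n₃²−n₁²±g(n), n₁²−n₂²±g(n) are all nonzero, n₁n₂n₃ ≠ 0, and nᵢ² ≠ 1/3 for i = 1,2,3. Then {n, v₁(n), v₂(n)} is a pure shear basis: it is an orthonormal basis of ℝ³ and σ_nn = 0, σ_{v₁v₁} = 0, σ_{v₂v₂} = 0. -/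
noncomputable section


section helperlemmas

private lemma schur3_s4 (x y z : ℝ) (hz : 0 ≤ z) (h1 : z ≤ x) (h2 : z ≤ y) :
    0 ≤ x*(x-y)*(x-z) + y*(y-x)*(y-z) + z*(z-x)*(z-y) := by
  nlinarith [mul_nonneg (mul_nonneg hz (sub_nonneg.2 h1)) (sub_nonneg.2 h2),
    mul_nonneg (sq_nonneg (x-y)) (by linarith : (0:ℝ) ≤ x + y - z)]

private lemma schur_aux (n₁ n₂ n₃ : ℝ) (h : n₁^2 + n₂^2 + n₃^2 = 1) :
    0 ≤ 1 - 4*(n₁^2*n₂^2 + n₂^2*n₃^2 + n₃^2*n₁^2) + 9*n₁^2*n₂^2*n₃^2 := by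
  have hEq : 1 - 4*(n₁^2*n₂^2 + n₂^2*n₃^2 + n₃^2*n₁^2) + 9*n₁^2*n₂^2*n₃^2
      = n₁^2*(n₁^2-n₂^2)*(n₁^2-n₃^2) + n₂^2*(n₂^2-n₁^2)*(n₂^2-n₃^2)
        + n₃^2*(n₃^2-n₁^2)*(n₃^2-n₂^2) := by
    linear_combination ((-1) + (-1)*n₃^2 + (-1)*n₃^4 + (-1)*n₂^2 + (2)*n₂^2*n₃^2 + (-1)*n₂^4 + (-1)*n₁^2 + (2)*n₁^2*n₃^2 + (2)*n₁^2*n₂^2 + (-1)*n₁^4) * h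
  rw [hEq]
  rcases le_total (n₁^2) (n₂^2) with h12 | h12 <;> rcases le_total (n₂^2) (n₃^2) with h23 | h23 <;>
    rcases le_total (n₁^2) (n₃^2) with h13 | h13
  · nlinarith [schur3_s4 (n₂^2) (n₃^2) (n₁^2) (sq_nonneg n₁) h12 h13]
  · nlinarith [schur3_s4 (n₁^2) (n₂^2) (n₃^2) (sq_nonneg n₃) h13 (le_trans h13 h12)]
  · nlinarith [schur3_s4 (n₂^2) (n₃^2) (n₁^2) (sq_nonneg n₁) h12 h13]
  · nlinarith [schur3_s4 (n₁^2) (n₂^2) (n₃^2) (sq_nonneg n₃) h13 h23]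
  · nlinarith [schur3_s4 (n₁^2) (n₃^2) (n₂^2) (sq_nonneg n₂) h12 h23]
  · nlinarith [schur3_s4 (n₁^2) (n₃^2) (n₂^2) (sq_nonneg n₂) (le_trans h23 h13) h23]
  · nlinarith [schur3_s4 (n₁^2) (n₂^2) (n₃^2) (sq_nonneg n₃) (le_trans h23 h12) h23]
  · nlinarith [schur3_s4 (n₁^2) (n₂^2) (n₃^2) (sq_nonneg n₃) h13 h23]

private lemma key_A (n₁ n₂ n₃ e : ℝ)
    (hunit : n₁^2 + n₂^2 + n₃^2 = 1)
    (he : e^2 = 1 - 4*(n₁^2*n₂^2 + n₂^2*n₃^2 + n₃^2*n₁^2) + 9*n₁^2*n₂^2*n₃^2) :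
    n₁^2*((n₃^2-n₁^2+e)*(n₁^2-n₂^2+e)) + n₂^2*((n₁^2-n₂^2+e)*(n₂^2-n₃^2+e))
      + n₃^2*((n₂^2-n₃^2+e)*(n₃^2-n₁^2+e)) = 0 := by
  linear_combination ((-1)*n₃^2 + (-1)*n₃^4 + (-1)*n₂^2 + (-2)*n₂^2*n₃^2 + (-1)*n₂^4 + (-1)*n₁^2 + (-2)*n₁^2*n₃^2 + (-2)*n₁^2*n₂^2 + (9)*n₁^2*n₂^2*n₃^2 + (-1)*n₁^4) * hunit + ((1)*n₃^2 + (1)*n₂^2 + (1)*n₁^2) * he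

private lemma key_T (n₁ n₂ n₃ e : ℝ)
    (hunit : n₁^2 + n₂^2 + n₃^2 = 1)
    (he : e^2 = 1 - 4*(n₁^2*n₂^2 + n₂^2*n₃^2 + n₃^2*n₁^2) + 9*n₁^2*n₂^2*n₃^2) :
    (n₃^2-n₂^2)*n₁^2*((n₃^2-n₁^2+e)^2*(n₁^2-n₂^2+e)^2)
      + (n₁^2-n₃^2)*n₂^2*((n₁^2-n₂^2+e)^2*(n₂^2-n₃^2+e)^2)
      + (n₂^2-n₁^2)*n₃^2*((n₂^2-n₃^2+e)^2*(n₃^2-n₁^2+e)^2)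
    = e * (n₁^2*((n₃^2-n₁^2+e)^2*(n₁^2-n₂^2+e)^2)
      + n₂^2*((n₁^2-n₂^2+e)^2*(n₂^2-n₃^2+e)^2)
      + n₃^2*((n₂^2-n₃^2+e)^2*(n₃^2-n₁^2+e)^2)) := by
  linear_combination ((1)*n₃^2*e + (1)*n₃^4*e + (-1)*n₃^6*e + (-1)*n₃^8*e + (1)*n₂^2*e + (2)*n₂^2*n₃^2*e + (-4)*n₂^2*n₃^4*e + (1)*n₂^2*n₃^6 + (-5)*n₂^2*n₃^6*e + (1)*n₂^2*n₃^8 + (1)*n₂^4*e + (-4)*n₂^4*n₃^2*e + (-8)*n₂^4*n₃^4*e + (1)*n₂^4*n₃^6 + (-1)*n₂^6*e + (-1)*n₂^6*n₃^2 + (-5)*n₂^6*n₃^2*e + (-1)*n₂^6*n₃^4 + (-1)*n₂^8*e + (-1)*n₂^8*n₃^2 + (1)*n₁^2*e + (2)*n₁^2*n₃^2*e + (-4)*n₁^2*n₃^4*e + (-1)*n₁^2*n₃^6 + (-5)*n₁^2*n₃^6*e + (-1)*n₁^2*n₃^8 + (2)*n₁^2*n₂^2*e + (-18)*n₁^2*n₂^2*n₃^2*e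 + (-8)*n₁^2*n₂^2*n₃^4*e + (18)*n₁^2*n₂^2*n₃^6*e + (-4)*n₁^2*n₂^4*e + (-8)*n₁^2*n₂^4*n₃^2*e + (45)*n₁^2*n₂^4*n₃^4*e + (-9)*n₁^2*n₂^4*n₃^6 + (1)*n₁^2*n₂^6 + (-5)*n₁^2*n₂^6*e + (18)*n₁^2*n₂^6*n₃^2*e + (9)*n₁^2*n₂^6*n₃^4 + (1)*n₁^2*n₂^8 + (1)*n₁^4*e + (-4)*n₁^4*n₃^2*e + (-8)*n₁^4*n₃^4*e + (-1)*n₁^4*n₃^6 + (-4)*n₁^4*n₂^2*e + (-8)*n₁^4*n₂^2*n₃^2*e + (45)*n₁^4*n₂^2*n₃^4*e + (9)*n₁^4*n₂^2*n₃^6 + (-8)*n₁^4*n₂^4*e + (45)*n₁^4*n₂^4*n₃^2*e + (-81)*n₁^4*n₂^4*n₃^4*e + (1)*n₁^4*n₂^6 + (-9)*n₁^4*n₂^6*n₃^2 + (-1)*n₁^6*e + (1)*n₁^6*n₃^2 + (-5)*n₁^6*n₃^2*e + (1)*n₁^6*n₃^4 + (-1)*n₁^6*n₂^2 + (-5)*n₁^6*n₂^2*e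 + (18)*n₁^6*n₂^2*n₃^2*e + (-9)*n₁^6*n₂^2*n₃^4 + (-1)*n₁^6*n₂^4 + (9)*n₁^6*n₂^4*n₃^2 + (-1)*n₁^8*e + (1)*n₁^8*n₃^2 + (-1)*n₁^8*n₂^2) * hunit + ((-1)*n₃^2*e + (-1)*n₃^2*e^3 + (2)*n₃^6*e + (-1)*n₂^2*e + (-1)*n₂^2*e^3 + (3)*n₂^2*n₃^4*e + (-1)*n₂^2*n₃^6 + (3)*n₂^4*n₃^2*e + (2)*n₂^6*e + (1)*n₂^6*n₃^2 + (-1)*n₁^2*e + (-1)*n₁^2*e^3 + (3)*n₁^2*n₃^4*e + (1)*n₁^2*n₃^6 + (12)*n₁^2*n₂^2*n₃^2*e + (-9)*n₁^2*n₂^2*n₃^4*e + (3)*n₁^2*n₂^4*e + (-9)*n₁^2*n₂^4*n₃^2*e + (-1)*n₁^2*n₂^6 + (3)*n₁^4*n₃^2*e + (3)*n₁^4*n₂^2*e + (-9)*n₁^4*n₂^2*n₃^2*e + (2)*n₁^6*e + (-1)*n₁^6*n₃^2 + (1)*n₁^6*n₂^2) * he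

private lemma key_B (n₁ n₂ n₃ g : ℝ)
    (hunit : n₁^2 + n₂^2 + n₃^2 = 1)
    (he : g^2 = 1 - 4*(n₁^2*n₂^2 + n₂^2*n₃^2 + n₃^2*n₁^2) + 9*n₁^2*n₂^2*n₃^2) :
    n₁^2*(((n₃^2-n₁^2)^2-g^2)*((n₁^2-n₂^2)^2-g^2))
      + n₂^2*(((n₁^2-n₂^2)^2-g^2)*((n₂^2-n₃^2)^2-g^2))
      + n₃^2*(((n₂^2-n₃^2)^2-g^2)*((n₃^2-n₁^2)^2-g^2)) = 0 := by
  linear_combination ((-1)*n₃^2 + (-1)*n₃^4 + (1)*n₃^6 + (1)*n₃^8 + (-1)*n₂^2 + (-2)*n₂^2*n₃^2 + (4)*n₂^2*n₃^4 + (5)*n₂^2*n₃^6 + (-1)*n₂^4 + (4)*n₂^4*n₃^2 + (8)*n₂^4*n₃^4 + (1)*n₂^6 + (5)*n₂^6*n₃^2 + (1)*n₂^8 + (-1)*n₁^2 + (-2)*n₁^2*n₃^2 + (4)*n₁^2*n₃^4 + (5)*n₁^2*n₃^6 + (-2)*n₁^2*n₂^2 + (18)*n₁^2*n₂^2*n₃^2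 + (8)*n₁^2*n₂^2*n₃^4 + (-18)*n₁^2*n₂^2*n₃^6 + (4)*n₁^2*n₂^4 + (8)*n₁^2*n₂^4*n₃^2 + (-45)*n₁^2*n₂^4*n₃^4 + (5)*n₁^2*n₂^6 + (-18)*n₁^2*n₂^6*n₃^2 + (-1)*n₁^4 + (4)*n₁^4*n₃^2 + (8)*n₁^4*n₃^4 + (4)*n₁^4*n₂^2 + (8)*n₁^4*n₂^2*n₃^2 + (-45)*n₁^4*n₂^2*n₃^4 + (8)*n₁^4*n₂^4 + (-45)*n₁^4*n₂^4*n₃^2 + (81)*n₁^4*n₂^4*n₃^4 + (1)*n₁^6 + (5)*n₁^6*n₃^2 + (5)*n₁^6*n₂^2 + (-18)*n₁^6*n₂^2*n₃^2 + (1)*n₁^8) * hunit + ((1)*n₃^2 + (1)*n₃^2*g^2 + (-2)*n₃^6 + (1)*n₂^2 + (1)*n₂^2*g^2 + (-3)*n₂^2*n₃^4 + (-3)*n₂^4*n₃^2 + (-2)*n₂^6 + (1)*n₁^2 + (1)*n₁^2*g^2 + (-3)*n₁^2*n₃^4 + (-12)*n₁^2*n₂^2*n₃^2 + (9)*n₁^2*n₂^2*n₃^4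 + (-3)*n₁^2*n₂^4 + (9)*n₁^2*n₂^4*n₃^2 + (-3)*n₁^4*n₃^2 + (-3)*n₁^4*n₂^2 + (9)*n₁^4*n₂^2*n₃^2 + (-2)*n₁^6) * he

private lemma key_C (n₁ n₂ n₃ g : ℝ)
    (hunit : n₁^2 + n₂^2 + n₃^2 = 1)
    (he : g^2 = 1 - 4*(n₁^2*n₂^2 + n₂^2*n₃^2 + n₃^2*n₁^2) + 9*n₁^2*n₂^2*n₃^2) :
    (n₃^2-n₂^2)*n₁^2*(((n₃^2-n₁^2)^2-g^2)*((n₁^2-n₂^2)^2-g^2))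
      + (n₁^2-n₃^2)*n₂^2*(((n₁^2-n₂^2)^2-g^2)*((n₂^2-n₃^2)^2-g^2))
      + (n₂^2-n₁^2)*n₃^2*(((n₂^2-n₃^2)^2-g^2)*((n₃^2-n₁^2)^2-g^2)) = 0 := by
  linear_combination ((1)*n₂^2*n₃^6 + (1)*n₂^2*n₃^8 + (1)*n₂^4*n₃^6 + (-1)*n₂^6*n₃^2 + (-1)*n₂^6*n₃^4 + (-1)*n₂^8*n₃^2 + (-1)*n₁^2*n₃^6 + (-1)*n₁^2*n₃^8 + (-9)*n₁^2*n₂^4*n₃^6 + (1)*n₁^2*n₂^6 + (9)*n₁^2*n₂^6*n₃^4 + (1)*n₁^2*n₂^8 + (-1)*n₁^4*n₃^6 + (9)*n₁^4*n₂^2*n₃^6 + (1)*n₁^4*n₂^6 + (-9)*n₁^4*n₂^6*n₃^2 + (1)*n₁^6*n₃^2 + (1)*n₁^6*n₃^4 + (-1)*n₁^6*n₂^2 + (-9)*n₁^6*n₂^2*n₃^4 + (-1)*n₁^6*n₂^4 + (9)*n₁^6*n₂^4*n₃^2 + (1)*n₁^8*n₃^2 + (-1)*n₁^8*n₂^2)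 * hunit + ((-1)*n₂^2*n₃^6 + (1)*n₂^6*n₃^2 + (1)*n₁^2*n₃^6 + (-1)*n₁^2*n₂^6 + (-1)*n₁^6*n₃^2 + (1)*n₁^6*n₂^2) * he

private lemma uvec_props (n₁ n₂ n₃ e t : ℝ)
    (hunit : n₁^2 + n₂^2 + n₃^2 = 1)
    (he : e^2 = 1 - 4*(n₁^2*n₂^2 + n₂^2*n₃^2 + n₃^2*n₁^2) + 9*n₁^2*n₂^2*n₃^2)
    (hd1 : n₂^2 - n₃^2 + e ≠ 0) (hd2 : n₃^2 - n₁^2 + e ≠ 0) (hd3 : n₁^2 - n₂^2 + e ≠ 0)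
    (hn1 : n₁ ≠ 0) :
    ((uvec n₁ n₂ n₃ e).1^2 + (uvec n₁ n₂ n₃ e).2.1^2 + (uvec n₁ n₂ n₃ e).2.2^2 = 1) ∧
    (n₁ * (uvec n₁ n₂ n₃ e).1 + n₂ * (uvec n₁ n₂ n₃ e).2.1 + n₃ * (uvec n₁ n₂ n₃ e).2.2 = 0) ∧
    (t*(n₃^2-n₂^2) * (uvec n₁ n₂ n₃ e).1^2 + t*(n₁^2-n₃^2) * (uvec n₁ n₂ n₃ e).2.1^2
      + t*(n₂^2-n₁^2) * (uvec n₁ n₂ n₃ e).2.2^2 = t * e) := by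
  simp only [uvec]
  obtain ⟨d₁, hd₁e⟩ : ∃ d, n₂^2 - n₃^2 + e = d := ⟨_, rfl⟩
  obtain ⟨d₂, hd₂e⟩ : ∃ d, n₃^2 - n₁^2 + e = d := ⟨_, rfl⟩
  obtain ⟨d₃, hd₃e⟩ : ∃ d, n₁^2 - n₂^2 + e = d := ⟨_, rfl⟩
  rw [hd₁e] at hd1; rw [hd₂e] at hd2; rw [hd₃e] at hd3
  rw [hd₁e, hd₂e, hd₃e]
  have hR : 0 < n₁^2/d₁^2 + n₂^2/d₂^2 + n₃^2/d₃^2 := by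
    have e1 : 0 < n₁^2/d₁^2 :=
      div_pos (lt_of_le_of_ne (sq_nonneg _) (Ne.symm (pow_ne_zero 2 hn1)))
        (lt_of_le_of_ne (sq_nonneg _) (Ne.symm (pow_ne_zero 2 hd1)))
    have e2 : 0 ≤ n₂^2/d₂^2 := div_nonneg (sq_nonneg _) (sq_nonneg _)
    have e3 : 0 ≤ n₃^2/d₃^2 := div_nonneg (sq_nonneg _) (sq_nonneg _)
    linarith
  have hrho : (rho n₁ n₂ n₃ e)^2 * (n₁^2/d₁^2 + n₂^2/d₂^2 + n₃^2/d₃^2) = 1 := by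
    rw [rho, hd₁e, hd₂e, hd₃e, div_pow, one_pow, Real.sq_sqrt hR.le]
    exact one_div_mul_cancel hR.ne'
  refine ⟨by linear_combination hrho, ?_, ?_⟩
  · have hA0 : n₁^2*(d₂*d₃) + n₂^2*(d₃*d₁) + n₃^2*(d₁*d₂) = 0 := by
      rw [← hd₁e, ← hd₂e, ← hd₃e]
      linear_combination key_A n₁ n₂ n₃ e hunit he
    have hA : n₁^2/d₁ + n₂^2/d₂ + n₃^2/d₃ = 0 := by
      rw [div_add_div _ _ hd1 hd2, div_add_div _ _ (mul_ne_zero hd1 hd2) hd3, div_eq_zero_iff]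
      left
      linear_combination hA0
    linear_combination (rho n₁ n₂ n₃ e) * hA
  · have hT0 : (n₃^2-n₂^2)*n₁^2*(d₂^2*d₃^2) + (n₁^2-n₃^2)*n₂^2*(d₃^2*d₁^2)
        + (n₂^2-n₁^2)*n₃^2*(d₁^2*d₂^2)
        = e * (n₁^2*(d₂^2*d₃^2) + n₂^2*(d₃^2*d₁^2) + n₃^2*(d₁^2*d₂^2)) := by
      rw [← hd₁e, ← hd₂e, ← hd₃e]
      linear_combination key_T n₁ n₂ n₃ e hunit he
    have hT : (n₃^2-n₂^2)*n₁^2/d₁^2 + (n₁^2-n₃^2)*n₂^2/d₂^2 + (n₂^2-n₁^2)*n₃^2/d₃^2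
        = e * (n₁^2/d₁^2 + n₂^2/d₂^2 + n₃^2/d₃^2) := by
      field_simp
      linear_combination hT0
    linear_combination (t * (rho n₁ n₂ n₃ e)^2) * hT + (t * e) * hrho

private lemma cross_props (n₁ n₂ n₃ g t : ℝ)
    (hunit : n₁^2 + n₂^2 + n₃^2 = 1)
    (he : g^2 = 1 - 4*(n₁^2*n₂^2 + n₂^2*n₃^2 + n₃^2*n₁^2) + 9*n₁^2*n₂^2*n₃^2)
    (hd1 : n₂^2 - n₃^2 + g ≠ 0) (hd2 : n₃^2 - n₁^2 + g ≠ 0) (hd3 : n₁^2 - n₂^2 + g ≠ 0)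
    (hd4 : n₂^2 - n₃^2 + -g ≠ 0) (hd5 : n₃^2 - n₁^2 + -g ≠ 0) (hd6 : n₁^2 - n₂^2 + -g ≠ 0) :
    ((uvec n₁ n₂ n₃ g).1 * (uvec n₁ n₂ n₃ (-g)).1
      + (uvec n₁ n₂ n₃ g).2.1 * (uvec n₁ n₂ n₃ (-g)).2.1
      + (uvec n₁ n₂ n₃ g).2.2 * (uvec n₁ n₂ n₃ (-g)).2.2 = 0) ∧
    (t*(n₃^2-n₂^2) * ((uvec n₁ n₂ n₃ g).1 * (uvec n₁ n₂ n₃ (-g)).1)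
      + t*(n₁^2-n₃^2) * ((uvec n₁ n₂ n₃ g).2.1 * (uvec n₁ n₂ n₃ (-g)).2.1)
      + t*(n₂^2-n₁^2) * ((uvec n₁ n₂ n₃ g).2.2 * (uvec n₁ n₂ n₃ (-g)).2.2) = 0) := by
  simp only [uvec]
  obtain ⟨p₁, hp₁e⟩ : ∃ d, n₂^2 - n₃^2 + g = d := ⟨_, rfl⟩
  obtain ⟨p₂, hp₂e⟩ : ∃ d, n₃^2 - n₁^2 + g = d := ⟨_, rfl⟩
  obtain ⟨p₃, hp₃e⟩ : ∃ d, n₁^2 - n₂^2 + g = d := ⟨_, rfl⟩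
  obtain ⟨m₁, hm₁e⟩ : ∃ d, n₂^2 - n₃^2 + -g = d := ⟨_, rfl⟩
  obtain ⟨m₂, hm₂e⟩ : ∃ d, n₃^2 - n₁^2 + -g = d := ⟨_, rfl⟩
  obtain ⟨m₃, hm₃e⟩ : ∃ d, n₁^2 - n₂^2 + -g = d := ⟨_, rfl⟩
  rw [hp₁e] at hd1; rw [hp₂e] at hd2; rw [hp₃e] at hd3
  rw [hm₁e] at hd4; rw [hm₂e] at hd5; rw [hm₃e] at hd6
  rw [hp₁e, hp₂e, hp₃e, hm₁e, hm₂e, hm₃e]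
  have hB0 : n₁^2*((p₂*m₂)*(p₃*m₃)) + n₂^2*((p₃*m₃)*(p₁*m₁)) + n₃^2*((p₁*m₁)*(p₂*m₂)) = 0 := by
    rw [← hp₁e, ← hp₂e, ← hp₃e, ← hm₁e, ← hm₂e, ← hm₃e]
    linear_combination key_B n₁ n₂ n₃ g hunit he
  have hB : n₁^2/(p₁*m₁) + n₂^2/(p₂*m₂) + n₃^2/(p₃*m₃) = 0 := by
    rw [div_add_div _ _ (mul_ne_zero hd1 hd4) (mul_ne_zero hd2 hd5),
      div_add_div _ _ (mul_ne_zero (mul_ne_zero hd1 hd4) (mul_ne_zero hd2 hd5))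
        (mul_ne_zero hd3 hd6), div_eq_zero_iff]
    left
    linear_combination hB0
  have hC0 : (n₃^2-n₂^2)*n₁^2*((p₂*m₂)*(p₃*m₃)) + (n₁^2-n₃^2)*n₂^2*((p₃*m₃)*(p₁*m₁))
      + (n₂^2-n₁^2)*n₃^2*((p₁*m₁)*(p₂*m₂)) = 0 := by
    rw [← hp₁e, ← hp₂e, ← hp₃e, ← hm₁e, ← hm₂e, ← hm₃e]
    linear_combination key_C n₁ n₂ n₃ g hunit he
  have hC : (n₃^2-n₂^2)*n₁^2/(p₁*m₁) + (n₁^2-n₃^2)*n₂^2/(p₂*m₂)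
      + (n₂^2-n₁^2)*n₃^2/(p₃*m₃) = 0 := by
    rw [div_add_div _ _ (mul_ne_zero hd1 hd4) (mul_ne_zero hd2 hd5),
      div_add_div _ _ (mul_ne_zero (mul_ne_zero hd1 hd4) (mul_ne_zero hd2 hd5))
        (mul_ne_zero hd3 hd6), div_eq_zero_iff]
    left
    linear_combination hC0
  constructor
  · linear_combination (rho n₁ n₂ n₃ g * rho n₁ n₂ n₃ (-g)) * hB
  · linear_combination (t * (rho n₁ n₂ n₃ g * rho n₁ n₂ n₃ (-g))) * hC

private lemma sigma_param (σ₁ σ₂ σ₃ n₁ n₂ n₃ : ℝ)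
    (hshear : σ₁ + σ₂ + σ₃ = 0)
    (hunit : n₁^2 + n₂^2 + n₃^2 = 1)
    (hnn : σ₁ * n₁^2 + σ₂ * n₂^2 + σ₃ * n₃^2 = 0)
    (ht1 : n₁^2 ≠ 1/3) :
    ∃ t, σ₁ = t*(n₃^2-n₂^2) ∧ σ₂ = t*(n₁^2-n₃^2) ∧ σ₃ = t*(n₂^2-n₁^2) := by
  have hrel : σ₁*(n₁^2-n₃^2) + σ₂*(n₂^2-n₃^2) = 0 := by
    linear_combination hnn - n₃^2 * hshear
  by_cases h13 : n₁^2 - n₃^2 = 0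
  · have hne : n₂^2 - n₃^2 ≠ 0 := by
      intro h
      apply ht1
      linarith
    have hne' : n₃^2 - n₂^2 ≠ 0 := fun h => hne (by linarith)
    have hσ2 : σ₂ = 0 := by
      have h0 : σ₂ * (n₂^2-n₃^2) = 0 := by linear_combination hrel - σ₁ * h13
      exact (mul_eq_zero.mp h0).resolve_right hne
    refine ⟨σ₁/(n₃^2-n₂^2), ?_, ?_, ?_⟩
    · rw [div_mul_eq_mul_div, eq_div_iff hne']
    · rw [hσ2, div_mul_eq_mul_div, eq_comm, div_eq_zero_iff]
      left
      linear_combination σ₁ * h13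
    · have hσ3 : σ₃ = -σ₁ := by linarith
      rw [hσ3, div_mul_eq_mul_div, eq_div_iff hne']
      linear_combination σ₁ * h13
  · refine ⟨σ₂/(n₁^2-n₃^2), ?_, ?_, ?_⟩
    · rw [div_mul_eq_mul_div, eq_div_iff h13]
      linear_combination hrel
    · rw [div_mul_eq_mul_div, eq_div_iff h13]
    · rw [div_mul_eq_mul_div, eq_div_iff h13]
      linear_combination (n₁^2-n₃^2) * hshear - hrel

end helperlemmas

/-- if n is a pure shear axis (σ_nn = 0) for a state of pure shear,
then {n, v₁(n), v₂(n)} is a pure shear basis. -/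
theorem stmt4 (σ₁ σ₂ σ₃ n₁ n₂ n₃ : ℝ)
    (hshear : σ₁ + σ₂ + σ₃ = 0)
    (hunit : n₁^2 + n₂^2 + n₃^2 = 1)
    (hnn : σ₁ * n₁^2 + σ₂ * n₂^2 + σ₃ * n₃^2 = 0)
    (h1 : n₂^2 - n₃^2 + gfun n₁ n₂ n₃ ≠ 0)
    (h2 : n₃^2 - n₁^2 + gfun n₁ n₂ n₃ ≠ 0)
    (h3 : n₁^2 - n₂^2 + gfun n₁ n₂ n₃ ≠ 0)
    (h4 : n₂^2 - n₃^2 - gfun n₁ n₂ n₃ ≠ 0)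
    (h5 : n₃^2 - n₁^2 - gfun n₁ n₂ n₃ ≠ 0)
    (h6 : n₁^2 - n₂^2 - gfun n₁ n₂ n₃ ≠ 0)
    (hprod : n₁ * n₂ * n₃ ≠ 0)
    (ht1 : n₁^2 ≠ 1/3) (ht2 : n₂^2 ≠ 1/3) (ht3 : n₃^2 ≠ 1/3) :
    -- {n, v₁(n), v₂(n)} is an orthonormal basis of ℝ³ ...
    (dot3 (n₁, n₂, n₃) (v1 n₁ n₂ n₃) = 0 ∧
     dot3 (n₁, n₂, n₃) (v2 n₁ n₂ n₃) = 0 ∧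
     dot3 (v1 n₁ n₂ n₃) (v2 n₁ n₂ n₃) = 0 ∧
     dot3 (v1 n₁ n₂ n₃) (v1 n₁ n₂ n₃) = 1 ∧
     dot3 (v2 n₁ n₂ n₃) (v2 n₁ n₂ n₃) = 1) ∧
    -- ... and σ_nn = σ_{v₁v₁} = σ_{v₂v₂} = 0.
    (σ₁ * n₁^2 + σ₂ * n₂^2 + σ₃ * n₃^2 = 0 ∧
     σ₁ * (v1 n₁ n₂ n₃).1^2 + σ₂ * (v1 n₁ n₂ n₃).2.1^2 + σ₃ * (v1 n₁ n₂ n₃).2.2^2 = 0 ∧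
     σ₁ * (v2 n₁ n₂ n₃).1^2 + σ₂ * (v2 n₁ n₂ n₃).2.1^2 + σ₃ * (v2 n₁ n₂ n₃).2.2^2 = 0) := by
  have hn1 : n₁ ≠ 0 := fun h => hprod (by rw [h]; ring)
  have hG0 := schur_aux n₁ n₂ n₃ hunit
  have hg2 : (gfun n₁ n₂ n₃)^2
      = 1 - 4*(n₁^2*n₂^2 + n₂^2*n₃^2 + n₃^2*n₁^2) + 9*n₁^2*n₂^2*n₃^2 := by
    simp only [gfun]
    exact Real.sq_sqrt hG0
  have hg2' : (-(gfun n₁ n₂ n₃))^2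
      = 1 - 4*(n₁^2*n₂^2 + n₂^2*n₃^2 + n₃^2*n₁^2) + 9*n₁^2*n₂^2*n₃^2 := by
    rw [neg_sq]; exact hg2
  have h4' : n₂^2 - n₃^2 + -(gfun n₁ n₂ n₃) ≠ 0 := by
    intro h; exact h4 (by linarith)
  have h5' : n₃^2 - n₁^2 + -(gfun n₁ n₂ n₃) ≠ 0 := by
    intro h; exact h5 (by linarith)
  have h6' : n₁^2 - n₂^2 + -(gfun n₁ n₂ n₃) ≠ 0 := by
    intro h; exact h6 (by linarith)
  obtain ⟨t, hσ1, hσ2, hσ3⟩ := sigma_param σ₁ σ₂ σ₃ n₁ n₂ n₃ hshear hunit hnn ht1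
  obtain ⟨Paa, Pna, Pσa⟩ :=
    uvec_props n₁ n₂ n₃ (gfun n₁ n₂ n₃) t hunit hg2 h1 h2 h3 hn1
  obtain ⟨Mbb, Mnb, Mσb⟩ :=
    uvec_props n₁ n₂ n₃ (-(gfun n₁ n₂ n₃)) t hunit hg2' h4' h5' h6' hn1
  obtain ⟨Cab, Cσ⟩ :=
    cross_props n₁ n₂ n₃ (gfun n₁ n₂ n₃) t hunit hg2 h1 h2 h3 h4' h5' h6'
  have hx : n₁*n₂*n₃*(n₁^2 - 1/3)*(n₂^2 - 1/3)*(n₃^2 - 1/3) ≠ 0 := by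
    refine mul_ne_zero (mul_ne_zero (mul_ne_zero hprod ?_) ?_) ?_ <;>
      [exact sub_ne_zero.mpr ht1; exact sub_ne_zero.mpr ht2; exact sub_ne_zero.mpr ht3]
  have hs2 : (sfun n₁ n₂ n₃)^2 = 1 := by
    simp only [sfun]
    rcases hx.lt_or_gt with h | h
    · rw [Real.sign_of_neg h]; norm_num
    · rw [Real.sign_of_pos h]; norm_num
  have hc2 : (1/Real.sqrt 2)^2 = 1/2 := by
    rw [div_pow, one_pow, Real.sq_sqrt (by norm_num : (0:ℝ) ≤ 2)]
  refine ⟨⟨?_, ?_, ?_, ?_, ?_⟩, hnn, ?_, ?_⟩ <;>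
    simp only [v1, v2, dot3, smul3, add3, sub3, uplus, uminus]
  · linear_combination (1/Real.sqrt 2) * Mnb - (1/Real.sqrt 2) * (sfun n₁ n₂ n₃) * Pna
  · linear_combination (1/Real.sqrt 2) * Mnb + (1/Real.sqrt 2) * (sfun n₁ n₂ n₃) * Pna
  · linear_combination (1/Real.sqrt 2)^2 * Mbb - (1/Real.sqrt 2)^2 * (sfun n₁ n₂ n₃)^2 * Paa
      - (1/Real.sqrt 2)^2 * hs2
  · linear_combination (1/Real.sqrt 2)^2 * Mbb + (1/Real.sqrt 2)^2 * (sfun n₁ n₂ n₃)^2 * Paa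
      - 2 * (1/Real.sqrt 2)^2 * (sfun n₁ n₂ n₃) * Cab + (1/Real.sqrt 2)^2 * hs2 + 2 * hc2
  · linear_combination (1/Real.sqrt 2)^2 * Mbb + (1/Real.sqrt 2)^2 * (sfun n₁ n₂ n₃)^2 * Paa
      + 2 * (1/Real.sqrt 2)^2 * (sfun n₁ n₂ n₃) * Cab + (1/Real.sqrt 2)^2 * hs2 + 2 * hc2
  · rw [hσ1, hσ2, hσ3]
    linear_combination (1/Real.sqrt 2)^2 * Mσb + (1/Real.sqrt 2)^2 * (sfun n₁ n₂ n₃)^2 * Pσa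
      - 2 * (1/Real.sqrt 2)^2 * (sfun n₁ n₂ n₃) * Cσ
      + (1/Real.sqrt 2)^2 * t * (gfun n₁ n₂ n₃) * hs2
  · rw [hσ1, hσ2, hσ3]
    linear_combination (1/Real.sqrt 2)^2 * Mσb + (1/Real.sqrt 2)^2 * (sfun n₁ n₂ n₃)^2 * Pσa
      + 2 * (1/Real.sqrt 2)^2 * (sfun n₁ n₂ n₃) * Cσ
      + (1/Real.sqrt 2)^2 * t * (gfun n₁ n₂ n₃) * hs2
end
end

section
/- Let {n, m, p} be an orthonormal basis of ℝ³, with n = (n₁,n₂,n₃), m = (m₁,m₂,m₃), p = (p₁,p₂,p₃). Then the determinant of the 3×3 matrix whose rows are (n₁²,n₂²,n₃²), (m₁²,m₂²,m₃²), (p₁²,p₂²,p₃²) equals (n₃²−n₂²)m₁² + (n₁²−n₃²)m₂² + (n₂²−n₁²)m₃². -/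
/-- for an orthonormal basis {n,m,p} of ℝ³, the determinant of the matrix of
squared components equals (n₃²−n₂²)m₁² + (n₁²−n₃²)m₂² + (n₂²−n₁²)m₃². -/
theorem stmt5 (n₁ n₂ n₃ m₁ m₂ m₃ p₁ p₂ p₃ : ℝ)
    (hn : n₁^2 + n₂^2 + n₃^2 = 1)
    (hm : m₁^2 + m₂^2 + m₃^2 = 1)
    (hp : p₁^2 + p₂^2 + p₃^2 = 1)
    (hnm : n₁ * m₁ + n₂ * m₂ + n₃ * m₃ = 0)
    (hnp : n₁ * p₁ + n₂ * p₂ + n₃ * p₃ = 0)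
    (hmp : m₁ * p₁ + m₂ * p₂ + m₃ * p₃ = 0) :
    Matrix.det !![n₁^2, n₂^2, n₃^2; m₁^2, m₂^2, m₃^2; p₁^2, p₂^2, p₃^2] =
      (n₃^2 - n₂^2) * m₁^2 + (n₁^2 - n₃^2) * m₂^2 + (n₂^2 - n₁^2) * m₃^2 := by
  have hQ : (!![n₁, n₂, n₃; m₁, m₂, m₃; p₁, p₂, p₃] : Matrix (Fin 3) (Fin 3) ℝ) *
      (!![n₁, m₁, p₁; n₂, m₂, p₂; n₃, m₃, p₃] : Matrix (Fin 3) (Fin 3) ℝ) = 1 := by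
    ext i j
    fin_cases i <;> fin_cases j <;>
      simp [Matrix.mul_apply, Fin.sum_univ_three, Matrix.one_apply] <;>
      linarith [hn, hm, hp, hnm, hnp, hmp, sq_abs n₁, sq_abs m₁, sq_abs p₁]
  have hQ' : (!![n₁, m₁, p₁; n₂, m₂, p₂; n₃, m₃, p₃] : Matrix (Fin 3) (Fin 3) ℝ) *
      !![n₁, n₂, n₃; m₁, m₂, m₃; p₁, p₂, p₃] = 1 := mul_eq_one_comm.mp hQ
  have c1 : n₁ * n₁ + m₁ * m₁ + p₁ * p₁ = 1 := by
    have h := congrFun (congrFun hQ' 0) 0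
    simpa [Matrix.mul_apply, Fin.sum_univ_three, Matrix.one_apply] using h
  have c2 : n₂ * n₂ + m₂ * m₂ + p₂ * p₂ = 1 := by
    have h := congrFun (congrFun hQ' 1) 1
    simpa [Matrix.mul_apply, Fin.sum_univ_three, Matrix.one_apply] using h
  have c3 : n₃ * n₃ + m₃ * m₃ + p₃ * p₃ = 1 := by
    have h := congrFun (congrFun hQ' 2) 2
    simpa [Matrix.mul_apply, Fin.sum_univ_three, Matrix.one_apply] using h
  simp [Matrix.det_fin_three]
  linear_combination (n₂^2 * m₃^2 - n₃^2 * m₂^2) * c1 +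
    (n₃^2 * m₁^2 - n₁^2 * m₃^2) * c2 + (n₁^2 * m₂^2 - n₂^2 * m₁^2) * c3
end

section
/- Let n = (n₁,n₂,n₃) be a unit vector in ℝ³ such that the six real numbers n₂²−n₃²±g(n), n₃²−n₁²±g(n), n₁²−n₂²±g(n) are all nonzero. Then for every m ∈ ℝ³ with ⟨m, n⟩ = 0, f(m) = g(n)·(⟨m, u₊(n)⟩² − ⟨m, u₋(n)⟩²). -/
noncomputable section

set_option maxHeartbeats 1000000 in
private lemma schur_aux_s7 (a b c : ℝ) (ha : 0 ≤ a) (hb : 0 ≤ b) (hc : 0 ≤ c)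
    (h : a + b + c = 1) :
    0 ≤ 1 - 4*(a*b + b*c + c*a) + 9*a*b*c := by
  have hom : 0 ≤ a*(a-b)*(a-c) + b*(b-a)*(b-c) + c*(c-a)*(c-b) := by
    rcases le_total a b with hab | hab <;> rcases le_total b c with hbc | hbc <;>
      rcases le_total a c with hac | hac <;>
      nlinarith [mul_nonneg (mul_nonneg ha (sub_nonneg.2 hab)) (sub_nonneg.2 hac),
        mul_nonneg (mul_nonneg hb (sub_nonneg.2 hab)) (sub_nonneg.2 hbc),
        mul_nonneg (mul_nonneg hc (sub_nonneg.2 hbc)) (sub_nonneg.2 hac),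
        mul_nonneg (sq_nonneg (a-b)) (sub_nonneg.2 hac),
        mul_nonneg (sq_nonneg (a-b)) (sub_nonneg.2 hbc),
        mul_nonneg (sq_nonneg (b-c)) (sub_nonneg.2 hab),
        mul_nonneg (sq_nonneg (b-c)) (sub_nonneg.2 hac),
        mul_nonneg (sq_nonneg (a-c)) (sub_nonneg.2 hab),
        mul_nonneg (sq_nonneg (a-c)) (sub_nonneg.2 hbc),
        mul_nonneg (sq_nonneg (a-b)) ha, mul_nonneg (sq_nonneg (a-b)) hb,
        mul_nonneg (sq_nonneg (a-b)) hc,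
        mul_nonneg (sq_nonneg (b-c)) ha, mul_nonneg (sq_nonneg (b-c)) hb,
        mul_nonneg (sq_nonneg (b-c)) hc,
        mul_nonneg (sq_nonneg (a-c)) ha, mul_nonneg (sq_nonneg (a-c)) hb,
        mul_nonneg (sq_nonneg (a-c)) hc]
  have e : 1 - 4*(a*b + b*c + c*a) + 9*a*b*c =
      a*(a-b)*(a-c) + b*(b-a)*(b-c) + c*(c-a)*(c-b) := by
    linear_combination (-(1+(a+b+c)+(a+b+c)^2-4*(a*b+b*c+c*a)))*h
  linarith [hom, e.ge]

/-- The key scalar identity: Σ nᵢ²/(Xᵢ + w) = 0 whenever w² equals the radicand. -/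
private lemma wsum_eq_zero (n₁ n₂ n₃ w : ℝ)
    (hu : n₁^2 + n₂^2 + n₃^2 = 1)
    (hw : w^2 = 1 - 4*(n₁^2*n₂^2 + n₂^2*n₃^2 + n₃^2*n₁^2) + 9*n₁^2*n₂^2*n₃^2)
    (k1 : n₂^2 - n₃^2 + w ≠ 0) (k2 : n₃^2 - n₁^2 + w ≠ 0) (k3 : n₁^2 - n₂^2 + w ≠ 0) :
    n₁^2/(n₂^2 - n₃^2 + w) + n₂^2/(n₃^2 - n₁^2 + w) + n₃^2/(n₁^2 - n₂^2 + w) = 0 := by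
  rw [div_add_div _ _ k1 k2, div_add_div _ _ (mul_ne_zero k1 k2) k3, div_eq_zero_iff]
  left
  linear_combination (n₃^2 + n₂^2 + n₁^2) * hw +
    ((-1)*n₃^2 + (-1)*n₃^4 + (-1)*n₂^2 + (-2)*n₂^2*n₃^2 + (-1)*n₂^4 + (-1)*n₁^2 +
      (-2)*n₁^2*n₃^2 + (-2)*n₁^2*n₂^2 + 9*n₁^2*n₂^2*n₃^2 + (-1)*n₁^4) * hu

/-- The orthogonality identity: Σ nᵢ²/((Xᵢ+g)(Xᵢ−g)) = 0. -/
private lemma vsum_eq_zero (n₁ n₂ n₃ g : ℝ)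
    (hu : n₁^2 + n₂^2 + n₃^2 = 1)
    (hg : g^2 = 1 - 4*(n₁^2*n₂^2 + n₂^2*n₃^2 + n₃^2*n₁^2) + 9*n₁^2*n₂^2*n₃^2)
    (k1 : n₂^2 - n₃^2 + g ≠ 0) (k2 : n₃^2 - n₁^2 + g ≠ 0) (k3 : n₁^2 - n₂^2 + g ≠ 0)
    (k4 : n₂^2 - n₃^2 + -g ≠ 0) (k5 : n₃^2 - n₁^2 + -g ≠ 0) (k6 : n₁^2 - n₂^2 + -g ≠ 0) :
    n₁^2/(n₂^2 - n₃^2 + g)/(n₂^2 - n₃^2 + -g) +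
    n₂^2/(n₃^2 - n₁^2 + g)/(n₃^2 - n₁^2 + -g) +
    n₃^2/(n₁^2 - n₂^2 + g)/(n₁^2 - n₂^2 + -g) = 0 := by
  rw [div_div, div_div, div_div]
  rw [div_add_div _ _ (mul_ne_zero k1 k4) (mul_ne_zero k2 k5),
    div_add_div _ _ (mul_ne_zero (mul_ne_zero k1 k4) (mul_ne_zero k2 k5)) (mul_ne_zero k3 k6),
    div_eq_zero_iff]
  left
  linear_combination
    (n₃^2 + n₃^2*g^2 + (-2)*n₃^6 + n₂^2 + n₂^2*g^2 + (-3)*n₂^2*n₃^4 + (-3)*n₂^4*n₃^2 +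
      (-2)*n₂^6 + n₁^2 + n₁^2*g^2 + (-3)*n₁^2*n₃^4 + (-12)*n₁^2*n₂^2*n₃^2 +
      9*n₁^2*n₂^2*n₃^4 + (-3)*n₁^2*n₂^4 + 9*n₁^2*n₂^4*n₃^2 + (-3)*n₁^4*n₃^2 +
      (-3)*n₁^4*n₂^2 + 9*n₁^4*n₂^2*n₃^2 + (-2)*n₁^6) * hg +
    ((-1)*n₃^2 + (-1)*n₃^4 + n₃^6 + n₃^8 + (-1)*n₂^2 + (-2)*n₂^2*n₃^2 + 4*n₂^2*n₃^4 +
      5*n₂^2*n₃^6 + (-1)*n₂^4 + 4*n₂^4*n₃^2 + 8*n₂^4*n₃^4 + n₂^6 + 5*n₂^6*n₃^2 + n₂^8 +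
      (-1)*n₁^2 + (-2)*n₁^2*n₃^2 + 4*n₁^2*n₃^4 + 5*n₁^2*n₃^6 + (-2)*n₁^2*n₂^2 +
      18*n₁^2*n₂^2*n₃^2 + 8*n₁^2*n₂^2*n₃^4 + (-18)*n₁^2*n₂^2*n₃^6 + 4*n₁^2*n₂^4 +
      8*n₁^2*n₂^4*n₃^2 + (-45)*n₁^2*n₂^4*n₃^4 + 5*n₁^2*n₂^6 + (-18)*n₁^2*n₂^6*n₃^2 +
      (-1)*n₁^4 + 4*n₁^4*n₃^2 + 8*n₁^4*n₃^4 + 4*n₁^4*n₂^2 + 8*n₁^4*n₂^2*n₃^2 +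
      (-45)*n₁^4*n₂^2*n₃^4 + 8*n₁^4*n₂^4 + (-45)*n₁^4*n₂^4*n₃^2 + 81*n₁^4*n₂^4*n₃^4 +
      n₁^6 + 5*n₁^6*n₃^2 + 5*n₁^6*n₂^2 + (-18)*n₁^6*n₂^2*n₃^2 + n₁^8) * hu

/-- If the rows of a 3×3 matrix are orthonormal, so are its columns. -/
private lemma cols_of_rows (x1 x2 x3 y1 y2 y3 z1 z2 z3 : ℝ)
    (hx : x1^2 + x2^2 + x3^2 = 1) (hy : y1^2 + y2^2 + y3^2 = 1) (hz : z1^2 + z2^2 + z3^2 = 1)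
    (hxy : x1*y1 + x2*y2 + x3*y3 = 0) (hxz : x1*z1 + x2*z2 + x3*z3 = 0)
    (hyz : y1*z1 + y2*z2 + y3*z3 = 0) :
    (x1^2 + y1^2 + z1^2 = 1) ∧ (x2^2 + y2^2 + z2^2 = 1) ∧ (x3^2 + y3^2 + z3^2 = 1) ∧
    (x1*x2 + y1*y2 + z1*z2 = 0) ∧ (x1*x3 + y1*y3 + z1*z3 = 0) ∧
    (x2*x3 + y2*y3 + z2*z3 = 0) := by
  have e11 : (1 - (x1^2 + y1^2 + z1^2)) =
      (1 - (x1^2 + y1^2 + z1^2))^2 + (x1*x2 + y1*y2 + z1*z2)^2 +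
        (x1*x3 + y1*y3 + z1*z3)^2 := by
    linear_combination (-(x1^2))*hx + (-(y1^2))*hy + (-(z1^2))*hz +
      (-(2*x1*y1))*hxy + (-(2*x1*z1))*hxz + (-(2*y1*z1))*hyz
  have e22 : (1 - (x2^2 + y2^2 + z2^2)) =
      (x1*x2 + y1*y2 + z1*z2)^2 + (1 - (x2^2 + y2^2 + z2^2))^2 +
        (x2*x3 + y2*y3 + z2*z3)^2 := by
    linear_combination (-(x2^2))*hx + (-(y2^2))*hy + (-(z2^2))*hz +
      (-(2*x2*y2))*hxy + (-(2*x2*z2))*hxz + (-(2*y2*z2))*hyz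
  have e33 : (1 - (x3^2 + y3^2 + z3^2)) =
      (x1*x3 + y1*y3 + z1*z3)^2 + (x2*x3 + y2*y3 + z2*z3)^2 +
        (1 - (x3^2 + y3^2 + z3^2))^2 := by
    linear_combination (-(x3^2))*hx + (-(y3^2))*hy + (-(z3^2))*hz +
      (-(2*x3*y3))*hxy + (-(2*x3*z3))*hxz + (-(2*y3*z3))*hyz
  have tr : (1 - (x1^2 + y1^2 + z1^2)) + (1 - (x2^2 + y2^2 + z2^2)) +
      (1 - (x3^2 + y3^2 + z3^2)) = 0 := by linear_combination -hx - hy - hz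
  have key : (1 - (x1^2 + y1^2 + z1^2))^2 + (1 - (x2^2 + y2^2 + z2^2))^2 +
      (1 - (x3^2 + y3^2 + z3^2))^2 + 2*(x1*x2 + y1*y2 + z1*z2)^2 +
      2*(x1*x3 + y1*y3 + z1*z3)^2 + 2*(x2*x3 + y2*y3 + z2*z3)^2 = 0 := by
    linarith [e11, e22, e33, tr]
  have s1 := sq_nonneg (1 - (x1^2 + y1^2 + z1^2))
  have s2 := sq_nonneg (1 - (x2^2 + y2^2 + z2^2))
  have s3 := sq_nonneg (1 - (x3^2 + y3^2 + z3^2))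
  have s4 := sq_nonneg (x1*x2 + y1*y2 + z1*z2)
  have s5 := sq_nonneg (x1*x3 + y1*y3 + z1*z3)
  have s6 := sq_nonneg (x2*x3 + y2*y3 + z2*z3)
  have q1 : 1 - (x1^2 + y1^2 + z1^2) = 0 := sq_eq_zero_iff.mp (by linarith)
  have q2 : 1 - (x2^2 + y2^2 + z2^2) = 0 := sq_eq_zero_iff.mp (by linarith)
  have q3 : 1 - (x3^2 + y3^2 + z3^2) = 0 := sq_eq_zero_iff.mp (by linarith)
  have q4 : x1*x2 + y1*y2 + z1*z2 = 0 := sq_eq_zero_iff.mp (by linarith)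
  have q5 : x1*x3 + y1*y3 + z1*z3 = 0 := sq_eq_zero_iff.mp (by linarith)
  have q6 : x2*x3 + y2*y3 + z2*z3 = 0 := sq_eq_zero_iff.mp (by linarith)
  exact ⟨by linarith, by linarith, by linarith, q4, q5, q6⟩

set_option maxHeartbeats 1000000 in
/-- for every m orthogonal to n, f(m) = g(n)(⟨m,u₊⟩² − ⟨m,u₋⟩²). -/
theorem stmt7 (n₁ n₂ n₃ : ℝ) (hunit : n₁^2 + n₂^2 + n₃^2 = 1)
    (h1 : n₂^2 - n₃^2 + gfun n₁ n₂ n₃ ≠ 0)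
    (h2 : n₃^2 - n₁^2 + gfun n₁ n₂ n₃ ≠ 0)
    (h3 : n₁^2 - n₂^2 + gfun n₁ n₂ n₃ ≠ 0)
    (h4 : n₂^2 - n₃^2 - gfun n₁ n₂ n₃ ≠ 0)
    (h5 : n₃^2 - n₁^2 - gfun n₁ n₂ n₃ ≠ 0)
    (h6 : n₁^2 - n₂^2 - gfun n₁ n₂ n₃ ≠ 0) :
    ∀ m : ℝ × ℝ × ℝ, dot3 m (n₁, n₂, n₃) = 0 →
      ffun n₁ n₂ n₃ m =
        gfun n₁ n₂ n₃ * ((dot3 m (uplus n₁ n₂ n₃))^2 - (dot3 m (uminus n₁ n₂ n₃))^2) := by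
  intro m hm
  obtain ⟨m₁, m₂, m₃⟩ := m
  simp only [ffun, dot3, uplus, uminus, uvec] at hm ⊢
  set g := gfun n₁ n₂ n₃ with hgdef
  -- the radicand is nonnegative (Schur), hence g² equals it
  have hE : 0 ≤ 1 - 4*(n₁^2*n₂^2 + n₂^2*n₃^2 + n₃^2*n₁^2) + 9*n₁^2*n₂^2*n₃^2 := by
    have := schur_aux_s7 (n₁^2) (n₂^2) (n₃^2) (sq_nonneg _) (sq_nonneg _) (sq_nonneg _) hunit
    linarith
  have hg2 : g^2 = 1 - 4*(n₁^2*n₂^2 + n₂^2*n₃^2 + n₃^2*n₁^2) + 9*n₁^2*n₂^2*n₃^2 := by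
    rw [hgdef, gfun, Real.sq_sqrt hE]
  clear_value g
  have k4 : n₂^2 - n₃^2 + -g ≠ 0 := by simpa [sub_eq_add_neg] using h4
  have k5 : n₃^2 - n₁^2 + -g ≠ 0 := by simpa [sub_eq_add_neg] using h5
  have k6 : n₁^2 - n₂^2 + -g ≠ 0 := by simpa [sub_eq_add_neg] using h6
  -- one of the nᵢ is nonzero
  have hn : n₁ ≠ 0 ∨ n₂ ≠ 0 ∨ n₃ ≠ 0 := by
    by_contra h
    push_neg at h
    obtain ⟨e1, e2, e3⟩ := h
    rw [e1, e2, e3] at hunit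
    norm_num at hunit
  -- positivity of the normalizing sums
  have hsp : 0 < n₁^2/(n₂^2-n₃^2+g)^2 + n₂^2/(n₃^2-n₁^2+g)^2 + n₃^2/(n₁^2-n₂^2+g)^2 := by
    rcases hn with h | h | h <;> positivity
  have hsm : 0 < n₁^2/(n₂^2-n₃^2+-g)^2 + n₂^2/(n₃^2-n₁^2+-g)^2 + n₃^2/(n₁^2-n₂^2+-g)^2 := by
    rcases hn with h | h | h <;> positivity
  set ρp := rho n₁ n₂ n₃ g with hrp
  set ρm := rho n₁ n₂ n₃ (-g) with hrm
  have hρp : ρp^2 = 1/(n₁^2/(n₂^2-n₃^2+g)^2 + n₂^2/(n₃^2-n₁^2+g)^2 + n₃^2/(n₁^2-n₂^2+g)^2) := by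
    rw [hrp, rho, div_pow, one_pow, Real.sq_sqrt hsp.le]
  have hρm : ρm^2 = 1/(n₁^2/(n₂^2-n₃^2+-g)^2 + n₂^2/(n₃^2-n₁^2+-g)^2 + n₃^2/(n₁^2-n₂^2+-g)^2) := by
    rw [hrm, rho, div_pow, one_pow]
    rw [Real.sq_sqrt (by linarith [hsm] : (0:ℝ) ≤ n₁^2/(n₂^2-n₃^2+-g)^2 + n₂^2/(n₃^2-n₁^2+-g)^2 + n₃^2/(n₁^2-n₂^2+-g)^2)]
  clear_value ρp ρm
  set u1 := ρp * (n₁ / (n₂^2 - n₃^2 + g)) with hu1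
  set u2 := ρp * (n₂ / (n₃^2 - n₁^2 + g)) with hu2
  set u3 := ρp * (n₃ / (n₁^2 - n₂^2 + g)) with hu3
  set v1 := ρm * (n₁ / (n₂^2 - n₃^2 + -g)) with hv1
  set v2 := ρm * (n₂ / (n₃^2 - n₁^2 + -g)) with hv2
  set v3 := ρm * (n₃ / (n₁^2 - n₂^2 + -g)) with hv3
  -- orthonormality of the rows n, u, v
  have hwp := wsum_eq_zero n₁ n₂ n₃ g hunit hg2 h1 h2 h3
  have hwm := wsum_eq_zero n₁ n₂ n₃ (-g) hunit (by linear_combination hg2) k4 k5 k6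
  have hvv := vsum_eq_zero n₁ n₂ n₃ g hunit hg2 h1 h2 h3 k4 k5 k6
  have hnu : n₁*u1 + n₂*u2 + n₃*u3 = 0 := by
    rw [hu1, hu2, hu3]; linear_combination ρp * hwp
  have hnv : n₁*v1 + n₂*v2 + n₃*v3 = 0 := by
    rw [hv1, hv2, hv3]; linear_combination ρm * hwm
  have huv : u1*v1 + u2*v2 + u3*v3 = 0 := by
    rw [hu1, hu2, hu3, hv1, hv2, hv3]; linear_combination (ρp*ρm) * hvv
  have e2 : n₁^2/(n₂^2-n₃^2+g)^2 + n₂^2/(n₃^2-n₁^2+g)^2 + n₃^2/(n₁^2-n₂^2+g)^2 =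
      (n₁/(n₂^2-n₃^2+g))^2 + (n₂/(n₃^2-n₁^2+g))^2 + (n₃/(n₁^2-n₂^2+g))^2 := by
    rw [← div_pow, ← div_pow, ← div_pow]
  have e3 : n₁^2/(n₂^2-n₃^2+-g)^2 + n₂^2/(n₃^2-n₁^2+-g)^2 + n₃^2/(n₁^2-n₂^2+-g)^2 =
      (n₁/(n₂^2-n₃^2+-g))^2 + (n₂/(n₃^2-n₁^2+-g))^2 + (n₃/(n₁^2-n₂^2+-g))^2 := by
    rw [← div_pow, ← div_pow, ← div_pow]
  have hrp2 : ρp^2 * ((n₁/(n₂^2-n₃^2+g))^2 + (n₂/(n₃^2-n₁^2+g))^2 + (n₃/(n₁^2-n₂^2+g))^2)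
      = 1 := by
    rw [← e2, hρp, one_div, inv_mul_cancel₀ hsp.ne']
  have hrm2 : ρm^2 * ((n₁/(n₂^2-n₃^2+-g))^2 + (n₂/(n₃^2-n₁^2+-g))^2 + (n₃/(n₁^2-n₂^2+-g))^2)
      = 1 := by
    rw [← e3, hρm, one_div, inv_mul_cancel₀ hsm.ne']
  have hnormu : u1^2 + u2^2 + u3^2 = 1 := by
    rw [hu1, hu2, hu3]; linear_combination hrp2
  have hnormv : v1^2 + v2^2 + v3^2 = 1 := by
    rw [hv1, hv2, hv3]; linear_combination hrm2
  obtain ⟨c11, c22, c33, c12, c13, c23⟩ :=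
    cols_of_rows n₁ n₂ n₃ u1 u2 u3 v1 v2 v3 hunit hnormu hnormv hnu hnv huv
  -- decomposition of m in terms of u, v (using m ⟂ n)
  have hm1 : m₁ = (m₁*u1 + m₂*u2 + m₃*u3)*u1 + (m₁*v1 + m₂*v2 + m₃*v3)*v1 := by
    linear_combination (-m₁)*c11 + (-m₂)*c12 + (-m₃)*c13 + n₁*hm
  have hm2 : m₂ = (m₁*u1 + m₂*u2 + m₃*u3)*u2 + (m₁*v1 + m₂*v2 + m₃*v3)*v2 := by
    linear_combination (-m₁)*c12 + (-m₂)*c22 + (-m₃)*c23 + n₂*hm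
  have hm3 : m₃ = (m₁*u1 + m₂*u2 + m₃*u3)*u3 + (m₁*v1 + m₂*v2 + m₃*v3)*v3 := by
    linear_combination (-m₁)*c13 + (-m₂)*c23 + (-m₃)*c33 + n₃*hm
  -- eigenvalue relations
  have hd1 : (n₂^2 - n₃^2 + g)⁻¹ * (n₂^2 - n₃^2 + g) = 1 := inv_mul_cancel₀ h1
  have hd2 : (n₃^2 - n₁^2 + g)⁻¹ * (n₃^2 - n₁^2 + g) = 1 := inv_mul_cancel₀ h2
  have hd3 : (n₁^2 - n₂^2 + g)⁻¹ * (n₁^2 - n₂^2 + g) = 1 := inv_mul_cancel₀ h3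
  have hd4 : (n₂^2 - n₃^2 + -g)⁻¹ * (n₂^2 - n₃^2 + -g) = 1 := inv_mul_cancel₀ k4
  have hd5 : (n₃^2 - n₁^2 + -g)⁻¹ * (n₃^2 - n₁^2 + -g) = 1 := inv_mul_cancel₀ k5
  have hd6 : (n₁^2 - n₂^2 + -g)⁻¹ * (n₁^2 - n₂^2 + -g) = 1 := inv_mul_cancel₀ k6
  have eig1 : (n₃^2 - n₂^2)*u1 = -(ρp*n₁) + g*u1 := by
    rw [hu1]; linear_combination (-(ρp*n₁))*hd1
  have eig2 : (n₁^2 - n₃^2)*u2 = -(ρp*n₂) + g*u2 := by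
    rw [hu2]; linear_combination (-(ρp*n₂))*hd2
  have eig3 : (n₂^2 - n₁^2)*u3 = -(ρp*n₃) + g*u3 := by
    rw [hu3]; linear_combination (-(ρp*n₃))*hd3
  have eig1' : (n₃^2 - n₂^2)*v1 = -(ρm*n₁) + (-g)*v1 := by
    rw [hv1]; linear_combination (-(ρm*n₁))*hd4
  have eig2' : (n₁^2 - n₃^2)*v2 = -(ρm*n₂) + (-g)*v2 := by
    rw [hv2]; linear_combination (-(ρm*n₂))*hd5
  have eig3' : (n₂^2 - n₁^2)*v3 = -(ρm*n₃) + (-g)*v3 := by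
    rw [hv3]; linear_combination (-(ρm*n₃))*hd6
  have esp : (n₃^2 - n₂^2)*(m₁*u1) + (n₁^2 - n₃^2)*(m₂*u2) + (n₂^2 - n₁^2)*(m₃*u3) =
      g*(m₁*u1 + m₂*u2 + m₃*u3) := by
    linear_combination m₁*eig1 + m₂*eig2 + m₃*eig3 - ρp*hm
  have esm : (n₃^2 - n₂^2)*(m₁*v1) + (n₁^2 - n₃^2)*(m₂*v2) + (n₂^2 - n₁^2)*(m₃*v3) =
      (-g)*(m₁*v1 + m₂*v2 + m₃*v3) := by
    linear_combination m₁*eig1' + m₂*eig2' + m₃*eig3' - ρm*hm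
  linear_combination ((n₃^2 - n₂^2)*m₁)*hm1 + ((n₁^2 - n₃^2)*m₂)*hm2 + ((n₂^2 - n₁^2)*m₃)*hm3 +
    (m₁*u1 + m₂*u2 + m₃*u3)*esp + (m₁*v1 + m₂*v2 + m₃*v3)*esm
end
end

section
/- Let σ₁, σ₂, σ₃ be reals with σ₁ + σ₂ + σ₃ = 0 and let n = (n₁,n₂,n₃) be a unit vector in ℝ³ with σ₁n₁² + σ₂n₂² + σ₃n₃² = 0. Set τ² = σ₁²n₁² + σ₂²n₂² + σ₃²n₃². Then σ₁·(3τ² − (σ₁² + σ₂² + σ₃²)) = (σ₁−σ₂)(σ₂−σ₃)(σ₃−σ₁)·(n₂² − n₃²). -/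
/-- relation between the dual stress and the squared traction:
σ₁(3τ² − (σ₁²+σ₂²+σ₃²)) = (σ₁−σ₂)(σ₂−σ₃)(σ₃−σ₁)(n₂²−n₃²). -/
theorem stmt12 (σ₁ σ₂ σ₃ n₁ n₂ n₃ : ℝ)
    (hshear : σ₁ + σ₂ + σ₃ = 0)
    (hunit : n₁^2 + n₂^2 + n₃^2 = 1)
    (hnn : σ₁ * n₁^2 + σ₂ * n₂^2 + σ₃ * n₃^2 = 0) :
    σ₁ * (3 * (σ₁^2*n₁^2 + σ₂^2*n₂^2 + σ₃^2*n₃^2) - (σ₁^2 + σ₂^2 + σ₃^2)) =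
      (σ₁ - σ₂) * (σ₂ - σ₃) * (σ₃ - σ₁) * (n₂^2 - n₃^2) := by
  have h3 : σ₃ = -σ₁ - σ₂ := by linarith
  have ha : n₁^2 = 1 - n₂^2 - n₃^2 := by linarith
  subst h3
  rw [ha] at hnn ⊢
  linear_combination (σ₁^2 - 2*σ₁*σ₂ - 2*σ₂^2) * hnn
end

section
/- Let σ₁, σ₂, σ₃ be reals with σ₁ + σ₂ + σ₃ = 0 and let n = (n₁,n₂,n₃) be a unit vector in ℝ³ with σ₁n₁² + σ₂n₂² + σ₃n₃² = 0. Then (1 − 4(n₁²n₂² + n₂²n₃² + n₃²n₁²) + 9n₁²n₂²n₃²)·σ₁² = −(σ₂σ₃n₁² + σ₃σ₁n₂² + σ₁σ₂n₃²)·(n₂² − n₃²)². (This is the squared form of the relation g(n) = d(n)/σ_(n), where g(n)² is the left factor, d(n)² = −(σ₂σ₃n₁² + σ₃σ₁n₂² + σ₁σ₂n₃²), and 1/σ_(n) = (n₂²−n₃²)/σ₁.) -/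
/-- squared form of the relation g(n) = d(n)/σ₍ₙ₎:
g(n)²σ₁² = d(n)²(n₂²−n₃²)². -/
theorem stmt14 (σ₁ σ₂ σ₃ n₁ n₂ n₃ : ℝ)
    (hshear : σ₁ + σ₂ + σ₃ = 0)
    (hunit : n₁^2 + n₂^2 + n₃^2 = 1)
    (hnn : σ₁ * n₁^2 + σ₂ * n₂^2 + σ₃ * n₃^2 = 0) :
    (1 - 4*(n₁^2*n₂^2 + n₂^2*n₃^2 + n₃^2*n₁^2) + 9*n₁^2*n₂^2*n₃^2) * σ₁^2 =
      -(σ₂*σ₃*n₁^2 + σ₃*σ₁*n₂^2 + σ₁*σ₂*n₃^2) * (n₂^2 - n₃^2)^2 := by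
  linear_combination
    ((-1)*σ₃ + 4*σ₃*n₂^2*n₃^2 + σ₃*n₂^2*(n₃^2)^2 + (-2)*σ₃*(n₂^2)^2*n₃^2 + σ₃*(n₂^2)^3
      + σ₃*n₁^2 + 2*σ₃*n₁^2*n₃^2 + σ₃*n₁^2*n₂^2 + (-4)*σ₃*n₁^2*n₂^2*n₃^2 + σ₃*n₁^2*(n₂^2)^2
      + (-1)*σ₂ + σ₂*(n₃^2)^3 + 4*σ₂*n₂^2*n₃^2 + (-2)*σ₂*n₂^2*(n₃^2)^2 + σ₂*(n₂^2)^2*n₃^2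
      + σ₂*n₁^2 + σ₂*n₁^2*n₃^2 + σ₂*n₁^2*(n₃^2)^2 + 2*σ₂*n₁^2*n₂^2 + (-4)*σ₂*n₁^2*n₂^2*n₃^2
      + σ₁ + (-4)*σ₁*n₂^2*n₃^2 + (-4)*σ₁*n₁^2*n₃^2 + (-4)*σ₁*n₁^2*n₂^2
      + 9*σ₁*n₁^2*n₂^2*n₃^2) * hshear
    + ((-1)*σ₃^2 + (-2)*σ₃^2*n₃^2 + (-1)*σ₃^2*n₂^2 + 4*σ₃^2*n₂^2*n₃^2 + (-1)*σ₃^2*(n₂^2)^2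
      + (-2)*σ₂*σ₃ + (-3)*σ₂*σ₃*n₃^2 + (-3)*σ₂*σ₃*n₂^2 + 6*σ₂*σ₃*n₂^2*n₃^2
      + (-1)*σ₂^2 + (-1)*σ₂^2*n₃^2 + (-1)*σ₂^2*(n₃^2)^2 + (-2)*σ₂^2*n₂^2
      + 4*σ₂^2*n₂^2*n₃^2) * hunit
    + ((-1)*σ₃ + 2*σ₃*n₃^2 + 3*σ₃*n₂^2 + (-5)*σ₃*n₂^2*n₃^2 + (-1)*σ₃*(n₂^2)^2
      + (-1)*σ₂ + 3*σ₂*n₃^2 + (-1)*σ₂*(n₃^2)^2 + 2*σ₂*n₂^2 + (-5)*σ₂*n₂^2*n₃^2) * hnn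
end

section
/- Let σ₁, σ₂, σ₃ be reals with σ₁ + σ₂ + σ₃ = 0 and let n = (n₁,n₂,n₃) be a unit vector in ℝ³ with σ₁n₁² + σ₂n₂² + σ₃n₃² = 0. If λ is a real number such that σ₁+λ, σ₂+λ, σ₃+λ are all nonzero and n₁²/(σ₁+λ) + n₂²/(σ₂+λ) + n₃²/(σ₃+λ) = 0, then λ² = −(σ₂σ₃n₁² + σ₃σ₁n₂² + σ₁σ₂n₃²). -/
/-- if n₁²/(σ₁+λ) + n₂²/(σ₂+λ) + n₃²/(σ₃+λ) = 0 with nonzero denominators,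
for a pure shear state with σ_nn = 0, then λ² = −(σ₂σ₃n₁² + σ₃σ₁n₂² + σ₁σ₂n₃²). -/
theorem stmt15 (σ₁ σ₂ σ₃ n₁ n₂ n₃ l : ℝ)
    (hshear : σ₁ + σ₂ + σ₃ = 0)
    (hunit : n₁^2 + n₂^2 + n₃^2 = 1)
    (hnn : σ₁ * n₁^2 + σ₂ * n₂^2 + σ₃ * n₃^2 = 0)
    (h1 : σ₁ + l ≠ 0) (h2 : σ₂ + l ≠ 0) (h3 : σ₃ + l ≠ 0)
    (hsum : n₁^2 / (σ₁ + l) + n₂^2 / (σ₂ + l) + n₃^2 / (σ₃ + l) = 0) :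
    l^2 = -(σ₂*σ₃*n₁^2 + σ₃*σ₁*n₂^2 + σ₁*σ₂*n₃^2) := by
  field_simp at hsum
  linear_combination hsum - l*(n₁^2+n₂^2+n₃^2)*hshear + l*hnn - l^2*hunit
end

section
/- Let A be a real symmetric 3×3 matrix with trace zero (a deviatoric stress), and let {a, b, c} be any orthonormal basis of ℝ³. Then 0 ≤ ⟨a, Aa⟩² + ⟨b, Ab⟩² + ⟨c, Ac⟩² ≤ tr(A²). Moreover the upper bound is attained when a, b, c are eigenvectors of A, and the lower bound is attained when {a,b,c} is a pure shear basis for A (i.e. ⟨a,Aa⟩ = ⟨b,Ab⟩ = ⟨c,Ac⟩ = 0), and such a basis exists since tr A = 0. -/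
/-!
In an orthonormal basis `v₁, v₂, v₃` the matrix `Mᵢⱼ = ⟨vᵢ, A vⱼ⟩` is orthogonally similar to the
symmetric matrix `A`, so `tr A² = Σ Mᵢⱼ²` is the sum of the squared diagonal entries plus twice the
squared off-diagonal ones, and the latter vanish for an eigenbasis. For a pure shear basis take
`a = (u₁ + u₂ + u₃) / √3` for an orthonormal eigenbasis `uᵢ`, so that `⟨a, Aa⟩ = tr A / 3 = 0`.
The form then has trace zero on `a⊥`: turning an orthonormal pair `e, f` of `a⊥` by a quarter turn
swaps `⟨e, Ae⟩` and `⟨f, Af⟩ = -⟨e, Ae⟩`, so by the intermediate value theorem some rotated `b`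
has `⟨b, Ab⟩ = 0`, and then `⟨c, Ac⟩ = tr A - ⟨a, Aa⟩ - ⟨b, Ab⟩ = 0`.
-/

open Matrix

/-- Three pairwise orthogonal unit vectors in ℝ³ (an orthonormal basis). -/
def ONB3 (a b c : Fin 3 → ℝ) : Prop :=
  a ⬝ᵥ a = 1 ∧ b ⬝ᵥ b = 1 ∧ c ⬝ᵥ c = 1 ∧ a ⬝ᵥ b = 0 ∧ a ⬝ᵥ c = 0 ∧ b ⬝ᵥ c = 0

open Real

section

variable {m n R : Type*} [Fintype n]

theorem mulVec_dotProduct_mulVec_mulVec [Fintype m] [CommSemiring R]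
    (U : Matrix m n R) (A : Matrix m m R) (x y : n → R) :
    (U *ᵥ x) ⬝ᵥ A *ᵥ (U *ᵥ y) = x ⬝ᵥ (Uᵀ * A * U) *ᵥ y := by
  rw [dotProduct_mulVec x, ← vecMul_vecMul, ← vecMul_vecMul, vecMul_transpose, dotProduct_mulVec,
    dotProduct_mulVec]

theorem of_mul_mul_transpose_of_apply [CommSemiring R] (v : m → n → R) (B : Matrix n n R)
    (i j : m) : (of v * B * (of v)ᵀ) i j = v i ⬝ᵥ B *ᵥ v j := by
  simp only [mul_apply, of_apply, transpose_apply, dotProduct, mulVec, Finset.mul_sum,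
    Finset.sum_mul]
  rw [Finset.sum_comm]
  simp only [mul_assoc]

theorem trace_mul_mul_of_mul_eq_one [DecidableEq n] [CommSemiring R] {P Q : Matrix n n R}
    (h : P * Q = 1) (B : Matrix n n R) : (Q * B * P).trace = B.trace := by
  rw [trace_mul_cycle, h, Matrix.one_mul]

theorem dotProduct_mulVec_comm_of_isSymm {A : Matrix n n ℝ} (hA : A.IsSymm) (x y : n → ℝ) :
    x ⬝ᵥ A *ᵥ y = y ⬝ᵥ A *ᵥ x := by
  rw [dotProduct_mulVec, ← mulVec_transpose, hA.eq, dotProduct_comm]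

theorem exists_orthogonal_transpose_mul_mul_eq_diagonal [DecidableEq n] {A : Matrix n n ℝ}
    (hA : A.IsSymm) : ∃ (U : Matrix n n ℝ) (μ : n → ℝ), Uᵀ * U = 1 ∧ Uᵀ * A * U = diagonal μ := by
  have hH : A.IsHermitian := isHermitian_iff_isSymm.mpr hA
  refine ⟨hH.eigenvectorUnitary, hH.eigenvalues, ?_, ?_⟩
  · simpa [star_eq_conjTranspose] using Unitary.coe_star_mul_self hH.eigenvectorUnitary
  · simpa [star_eq_conjTranspose] using hH.conjStarAlgAut_star_eigenvectorUnitary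

theorem exists_angle_dotProduct_mulVec_eq_zero (A : Matrix n n ℝ) {e f : n → ℝ}
    (h : e ⬝ᵥ A *ᵥ e + f ⬝ᵥ A *ᵥ f = 0) :
    ∃ θ : ℝ, (cos θ • e + sin θ • f) ⬝ᵥ A *ᵥ (cos θ • e + sin θ • f) = 0 := by
  set g : ℝ → ℝ := fun θ => (cos θ • e + sin θ • f) ⬝ᵥ A *ᵥ (cos θ • e + sin θ • f)
  have hg : Continuous g := by fun_prop
  have h0 : g 0 = e ⬝ᵥ A *ᵥ e := by simp [g]
  have hπ : g (π / 2) = f ⬝ᵥ A *ᵥ f := by simp [g]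
  have hmem : (0 : ℝ) ∈ Set.uIcc (g 0) (g (π / 2)) := by
    rw [h0, hπ, Set.mem_uIcc]
    rcases le_total 0 (e ⬝ᵥ A *ᵥ e) with hle | hle
    · right; constructor <;> linarith
    · left; constructor <;> linarith
  obtain ⟨θ, -, hθ⟩ := intermediate_value_uIcc hg.continuousOn hmem
  exact ⟨θ, hθ⟩

end

namespace ONB3

variable {a b c : Fin 3 → ℝ}

theorem mul_transpose_self (h : ONB3 a b c) : of ![a, b, c] * (of ![a, b, c])ᵀ = 1 := by
  obtain ⟨haa, hbb, hcc, hab, hac, hbc⟩ := h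
  ext i j
  have hij := of_mul_mul_transpose_of_apply ![a, b, c] 1 i j
  rw [Matrix.mul_one, one_mulVec] at hij
  rw [hij]
  fin_cases i <;> fin_cases j <;> simp [dotProduct_comm, *]

theorem transpose_mul_self (h : ONB3 a b c) : (of ![a, b, c])ᵀ * of ![a, b, c] = 1 :=
  mul_eq_one_comm.mp h.mul_transpose_self

theorem trace_eq (h : ONB3 a b c) (A : Matrix (Fin 3) (Fin 3) ℝ) :
    A.trace = a ⬝ᵥ A *ᵥ a + b ⬝ᵥ A *ᵥ b + c ⬝ᵥ A *ᵥ c := by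
  rw [← trace_mul_mul_of_mul_eq_one h.transpose_mul_self A, trace_fin_three]
  simp only [of_mul_mul_transpose_of_apply]
  rfl

theorem trace_mul_self_eq (h : ONB3 a b c) {A : Matrix (Fin 3) (Fin 3) ℝ} (hA : A.IsSymm) :
    (A * A).trace = (a ⬝ᵥ A *ᵥ a) ^ 2 + (b ⬝ᵥ A *ᵥ b) ^ 2 + (c ⬝ᵥ A *ᵥ c) ^ 2
      + 2 * ((a ⬝ᵥ A *ᵥ b) ^ 2 + (a ⬝ᵥ A *ᵥ c) ^ 2 + (b ⬝ᵥ A *ᵥ c) ^ 2) := by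
  set P := of ![a, b, c]
  have hconj : P * (A * A) * Pᵀ = (P * A * Pᵀ) * (P * A * Pᵀ) := by
    simp only [Matrix.mul_assoc]
    rw [← Matrix.mul_assoc Pᵀ P, h.transpose_mul_self, Matrix.one_mul]
  have hM (i j : Fin 3) : (P * A * Pᵀ) i j = ![a, b, c] i ⬝ᵥ A *ᵥ ![a, b, c] j :=
    of_mul_mul_transpose_of_apply _ A i j
  rw [← trace_mul_mul_of_mul_eq_one h.transpose_mul_self, hconj]
  generalize P * A * Pᵀ = M at hM
  simp only [trace_fin_three, mul_apply, Fin.sum_univ_three, hM]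
  simp only [Fin.isValue, cons_val_zero, cons_val_one, cons_val_two, Nat.succ_eq_add_one,
    Nat.reduceAdd, head_cons, tail_cons]
  rw [dotProduct_mulVec_comm_of_isSymm hA b a, dotProduct_mulVec_comm_of_isSymm hA c a,
    dotProduct_mulVec_comm_of_isSymm hA c b]
  ring

theorem sum_sq_le_trace_mul_self (h : ONB3 a b c) {A : Matrix (Fin 3) (Fin 3) ℝ}
    (hA : A.IsSymm) :
    (a ⬝ᵥ A *ᵥ a) ^ 2 + (b ⬝ᵥ A *ᵥ b) ^ 2 + (c ⬝ᵥ A *ᵥ c) ^ 2 ≤ (A * A).trace := by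
  rw [h.trace_mul_self_eq hA]
  exact le_add_of_nonneg_right (by positivity)

theorem trace_mul_self_eq_of_mulVec_eq_smul (h : ONB3 a b c) {A : Matrix (Fin 3) (Fin 3) ℝ}
    (hA : A.IsSymm) (hb : ∃ β : ℝ, A *ᵥ b = β • b) (hc : ∃ γ : ℝ, A *ᵥ c = γ • c) :
    (A * A).trace = (a ⬝ᵥ A *ᵥ a) ^ 2 + (b ⬝ᵥ A *ᵥ b) ^ 2 + (c ⬝ᵥ A *ᵥ c) ^ 2 := by
  rw [h.trace_mul_self_eq hA]
  obtain ⟨-, -, -, hab, hac, hbc⟩ := h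
  obtain ⟨β, hβ⟩ := hb
  obtain ⟨γ, hγ⟩ := hc
  simp only [hβ, hγ, dotProduct_smul, hab, hac, hbc, smul_zero]
  ring

theorem rotate {e f : Fin 3 → ℝ} (h : ONB3 a e f) (θ : ℝ) :
    ONB3 a (cos θ • e + sin θ • f) (-sin θ • e + cos θ • f) := by
  obtain ⟨haa, hee, hff, hae, haf, hef⟩ := h
  have hfe : f ⬝ᵥ e = 0 := by rw [dotProduct_comm, hef]
  have hθ := sin_sq_add_cos_sq θ
  refine ⟨haa, ?_, ?_, ?_, ?_, ?_⟩ <;>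
    simp only [dotProduct_add, add_dotProduct, dotProduct_smul, smul_dotProduct, smul_eq_mul,
      hee, hff, hae, haf, hef, hfe]
  · linear_combination hθ
  · linear_combination hθ
  all_goals ring

theorem mulVec (h : ONB3 a b c) {U : Matrix (Fin 3) (Fin 3) ℝ} (hU : Uᵀ * U = 1) :
    ONB3 (U *ᵥ a) (U *ᵥ b) (U *ᵥ c) := by
  have hdot (x y : Fin 3 → ℝ) : (U *ᵥ x) ⬝ᵥ (U *ᵥ y) = x ⬝ᵥ y := by
    simpa [hU] using mulVec_dotProduct_mulVec_mulVec U 1 x y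
  obtain ⟨haa, hbb, hcc, hab, hac, hbc⟩ := h
  exact ⟨by rw [hdot, haa], by rw [hdot, hbb], by rw [hdot, hcc], by rw [hdot, hab],
    by rw [hdot, hac], by rw [hdot, hbc]⟩

theorem exists_pureShear_of_dotProduct_mulVec_eq_zero {e f : Fin 3 → ℝ}
    {A : Matrix (Fin 3) (Fin 3) ℝ} (htr : A.trace = 0) (h : ONB3 a e f)
    (ha : a ⬝ᵥ A *ᵥ a = 0) :
    ∃ b c, ONB3 a b c ∧ b ⬝ᵥ A *ᵥ b = 0 ∧ c ⬝ᵥ A *ᵥ c = 0 := by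
  have hef : e ⬝ᵥ A *ᵥ e + f ⬝ᵥ A *ᵥ f = 0 := by linarith [h.trace_eq A]
  obtain ⟨θ, hθ⟩ := exists_angle_dotProduct_mulVec_eq_zero A hef
  have h' := h.rotate θ
  exact ⟨_, _, h', hθ, by linarith [h'.trace_eq A]⟩

end ONB3

theorem onb3_sqrt_three_sqrt_two_sqrt_six :
    ONB3 ![1 / √3, 1 / √3, 1 / √3] ![1 / √2, -1 / √2, 0] ![1 / √6, 1 / √6, -2 / √6] := by
  have h2 := sq_sqrt (show (0 : ℝ) ≤ 2 by norm_num)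
  have h3 := sq_sqrt (show (0 : ℝ) ≤ 3 by norm_num)
  have h6 : √6 = √2 * √3 := by rw [← sqrt_mul (by norm_num)]; norm_num
  refine ⟨?_, ?_, ?_, ?_, ?_, ?_⟩ <;>
    simp only [dotProduct, Fin.sum_univ_three, h6, Fin.isValue, cons_val_zero, cons_val_one,
      cons_val] <;>
    field_simp <;> norm_num [h2, h3]

theorem exists_onb3_dotProduct_mulVec_eq_zero {A : Matrix (Fin 3) (Fin 3) ℝ} (hA : A.IsSymm)
    (htr : A.trace = 0) : ∃ a e f, ONB3 a e f ∧ a ⬝ᵥ A *ᵥ a = 0 := by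
  obtain ⟨U, μ, hU, hUAU⟩ := exists_orthogonal_transpose_mul_mul_eq_diagonal hA
  have hμ : μ 0 + μ 1 + μ 2 = 0 := by
    rw [← htr, ← trace_mul_mul_of_mul_eq_one (mul_eq_one_comm.mp hU) A, hUAU, trace_diagonal,
      Fin.sum_univ_three]
  refine ⟨_, _, _, onb3_sqrt_three_sqrt_two_sqrt_six.mulVec hU, ?_⟩
  rw [mulVec_dotProduct_mulVec_mulVec, hUAU]
  simp only [dotProduct, mulVec_diagonal, Fin.sum_univ_three, Fin.isValue, cons_val_zero,
    cons_val_one, cons_val]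
  linear_combination (1 / √3) ^ 2 * hμ

theorem exists_pureShear_basis {A : Matrix (Fin 3) (Fin 3) ℝ} (hA : A.IsSymm) (htr : A.trace = 0) :
    ∃ a b c, ONB3 a b c ∧ a ⬝ᵥ A *ᵥ a = 0 ∧ b ⬝ᵥ A *ᵥ b = 0 ∧ c ⬝ᵥ A *ᵥ c = 0 := by
  obtain ⟨a, e, f, h, ha⟩ := exists_onb3_dotProduct_mulVec_eq_zero hA htr
  obtain ⟨b, c, h', hb, hc⟩ := h.exists_pureShear_of_dotProduct_mulVec_eq_zero htr ha
  exact ⟨a, b, c, h', ha, hb, hc⟩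

/-- for a symmetric traceless 3×3 matrix A and any orthonormal basis {a,b,c},
0 ≤ ⟨a,Aa⟩² + ⟨b,Ab⟩² + ⟨c,Ac⟩² ≤ tr(A²); the upper bound is attained for an eigenbasis,
the lower bound is attained for a pure shear basis, and a pure shear basis exists. -/
theorem stmt18 (A : Matrix (Fin 3) (Fin 3) ℝ) (hA : A.IsSymm) (htr : A.trace = 0) :
    (∀ a b c : Fin 3 → ℝ, ONB3 a b c →
      0 ≤ (a ⬝ᵥ A.mulVec a)^2 + (b ⬝ᵥ A.mulVec b)^2 + (c ⬝ᵥ A.mulVec c)^2 ∧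
      (a ⬝ᵥ A.mulVec a)^2 + (b ⬝ᵥ A.mulVec b)^2 + (c ⬝ᵥ A.mulVec c)^2 ≤ (A * A).trace) ∧
    (∀ a b c : Fin 3 → ℝ, ONB3 a b c →
      (∃ α : ℝ, A.mulVec a = α • a) → (∃ β : ℝ, A.mulVec b = β • b) →
      (∃ γ : ℝ, A.mulVec c = γ • c) →
      (a ⬝ᵥ A.mulVec a)^2 + (b ⬝ᵥ A.mulVec b)^2 + (c ⬝ᵥ A.mulVec c)^2 = (A * A).trace) ∧
    (∀ a b c : Fin 3 → ℝ, ONB3 a b c →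
      a ⬝ᵥ A.mulVec a = 0 → b ⬝ᵥ A.mulVec b = 0 → c ⬝ᵥ A.mulVec c = 0 →
      (a ⬝ᵥ A.mulVec a)^2 + (b ⬝ᵥ A.mulVec b)^2 + (c ⬝ᵥ A.mulVec c)^2 = 0) ∧
    (∃ a b c : Fin 3 → ℝ, ONB3 a b c ∧
      a ⬝ᵥ A.mulVec a = 0 ∧ b ⬝ᵥ A.mulVec b = 0 ∧ c ⬝ᵥ A.mulVec c = 0) := by
  refine ⟨fun a b c h => ⟨by positivity, h.sum_sq_le_trace_mul_self hA⟩,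
    fun a b c h _ hb hc => (h.trace_mul_self_eq_of_mulVec_eq_smul hA hb hc).symm,
    fun a b c _ ha hb hc => by rw [ha, hb, hc]; norm_num, exists_pureShear_basis hA htr⟩
end
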